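/- arXiv:2005.09050 — 2 statements merged into one kernel-verified Lean document; each statement's English description precedes it below -/
import Mathlib

section
/- Let (K₀, K₁) be a pair with K₁ an infinite compact, totally disconnected metrizable space and K₀ ⊆ K₁ closed and containing all isolated points of K₁. Then there exists a sequence (ξ_i)_{i∈ℕ} of finite partitions of K₁ by clopen sets such that: ξ₀ = {K₁}; ξ₁ has 2 or 4 elements; each ξ_{i+1} refines ξ_i; for i ≥ 1, every A ∈ ξ_i not in ξ_{i+1} is the disjoint union of exactly three distinct nonempty elements of ξ_{i+1}; for i ≥ 1 and A ∈ ξ_i, A ∩ K₀ ≠ ∅ if and only if A ∈ ξ_{i−1} ∪ ξ_{i+1}; and the sequence separates points of K₁. -/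
/-- A finite partition of a topological space by clopen sets. -/
def IsFiniteClopenPartition {K : Type*} [TopologicalSpace K] (ξ : Set (Set K)) : Prop :=
  ξ.Finite ∧ (∀ A ∈ ξ, IsClopen A ∧ A.Nonempty) ∧ ξ.PairwiseDisjoint id ∧ ⋃₀ ξ = Set.univ

/-- `η` refines `ξ`. -/
def PartRefines {K : Type*} (ξ η : Set (Set K)) : Prop :=
  ∀ A ∈ η, ∃ B ∈ ξ, A ⊆ B

open Set

section Aux

variable {K : Type*} [TopologicalSpace K]

/-- Pieces allowed in our partitions: clopen, nonempty, and infinite or of odd cardinality. -/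
def LGood (A : Set K) : Prop := IsClopen A ∧ A.Nonempty ∧ (A.Infinite ∨ Odd A.ncard)

lemma isClopen_singleton_of_finite [T1Space K] {A : Set K} (hA : IsClopen A) (hfin : A.Finite)
    {x : K} (hx : x ∈ A) : IsClopen ({x} : Set K) := by
  refine ⟨isClosed_singleton, ?_⟩
  have h : ({x} : Set K) = A \ (A \ {x}) := by
    ext y; simp only [mem_singleton_iff, mem_diff, not_and, not_not]
    constructor
    · rintro rfl; exact ⟨hx, fun _ => rfl⟩
    · rintro ⟨hy, h⟩; exact h hy
  rw [h]
  exact hA.isOpen.sdiff ((hfin.diff)).isClosed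

lemma lgood_singleton [T1Space K] {A : Set K} (hA : IsClopen A) (hfin : A.Finite)
    {x : K} (hx : x ∈ A) : LGood ({x} : Set K) :=
  ⟨isClopen_singleton_of_finite hA hfin hx, ⟨x, rfl⟩, Or.inr (by simp [Set.ncard_singleton])⟩

/-- Removing a point from a finite clopen set of even (nonzero) cardinality yields a good set. -/
lemma lgood_diff_even [T1Space K] {A : Set K} (hA : IsClopen A) (hfin : A.Finite)
    (hev : Even A.ncard) {x : K} (hx : x ∈ A) : LGood (A \ {x}) := by
  have h1 : 1 ≤ A.ncard := (Set.ncard_pos hfin).2 ⟨x, hx⟩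
  have h2 : 2 ≤ A.ncard := by
    rcases hev with ⟨k, hk⟩; omega
  have hdc : (A \ {x}).ncard = A.ncard - 1 := Set.ncard_diff_singleton_of_mem hx
  refine ⟨hA.diff (isClopen_singleton_of_finite hA hfin hx), ?_, Or.inr ?_⟩
  · rw [← Set.ncard_pos (hfin.diff), hdc]; omega
  · rw [hdc]; exact Nat.Even.sub_odd h1 hev odd_one

variable [T2Space K] [CompactSpace K] [TotallyDisconnectedSpace K]

lemma fix_pair {C D : Set K} (hC : IsClopen C) (hD : IsClopen D) (hCne : C.Nonempty)
    (hDne : D.Nonempty) (hdisj : Disjoint C D) (hDinf : D.Infinite) :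
    ∃ C' D' : Set K, LGood C' ∧ LGood D' ∧ Disjoint C' D' ∧ C' ∪ D' = C ∪ D := by
  by_cases hCfin : C.Finite
  · by_cases hodd : Odd C.ncard
    · exact ⟨C, D, ⟨hC, hCne, Or.inr hodd⟩, ⟨hD, hDne, Or.inl hDinf⟩, hdisj, rfl⟩
    · obtain ⟨c, hc⟩ := hCne
      have hev : Even C.ncard := Nat.not_odd_iff_even.mp hodd
      refine ⟨C \ {c}, D ∪ {c}, lgood_diff_even hC hCfin hev hc, ?_, ?_, ?_⟩
      · exact ⟨hD.union (isClopen_singleton_of_finite hC hCfin hc),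
          ⟨c, Or.inr rfl⟩, Or.inl (hDinf.mono subset_union_left)⟩
      · rw [Set.disjoint_union_right]
        exact ⟨(hdisj.mono_left diff_subset), by simp⟩
      · ext y
        simp only [mem_union, mem_diff, mem_singleton_iff]
        constructor
        · rintro (⟨h, _⟩ | h | rfl)
          · exact Or.inl h
          · exact Or.inr h
          · exact Or.inl hc
        · rintro (h | h)
          · by_cases hyc : y = c
            · exact Or.inr (Or.inr hyc)
            · exact Or.inl ⟨h, hyc⟩
          · exact Or.inr (Or.inl h)
  · exact ⟨C, D, ⟨hC, hCne, Or.inl (fun h => hCfin h)⟩, ⟨hD, hDne, Or.inl hDinf⟩, hdisj, rfl⟩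

lemma two_split {A : Set K} (hA : IsClopen A) (hinf : A.Infinite) :
    ∃ C D : Set K, LGood C ∧ LGood D ∧ Disjoint C D ∧ C ∪ D = A := by
  obtain ⟨x, hx, y, hy, hxy⟩ := hinf.nontrivial
  obtain ⟨V, hV, hxV, hyV⟩ := exists_isClopen_of_totally_separated hxy
  have hCc : IsClopen (A ∩ V) := hA.inter hV
  have hDc : IsClopen (A \ V) := hA.diff hV
  have hdisj : Disjoint (A ∩ V) (A \ V) :=
    Set.disjoint_left.mpr (by intro a ha hb; exact hb.2 ha.2)
  have hun : (A ∩ V) ∪ (A \ V) = A := inter_union_diff A V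
  have hCne : (A ∩ V).Nonempty := ⟨x, hx, hxV⟩
  have hDne : (A \ V).Nonempty := ⟨y, hy, hyV⟩
  have hor : (A ∩ V).Infinite ∨ (A \ V).Infinite := by
    rw [← hun] at hinf; exact Set.infinite_union.mp hinf
  rcases hor with h | h
  · obtain ⟨C', D', h1, h2, h3, h4⟩ := fix_pair hDc hCc hDne hCne hdisj.symm h
    exact ⟨C', D', h1, h2, h3, by rw [h4, union_comm, hun]⟩
  · obtain ⟨C', D', h1, h2, h3, h4⟩ := fix_pair hCc hDc hCne hDne hdisj h
    exact ⟨C', D', h1, h2, h3, by rw [h4, hun]⟩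

lemma three_split_infinite {A : Set K} (hA : IsClopen A) (hinf : A.Infinite) :
    ∃ B₁ B₂ B₃ : Set K, LGood B₁ ∧ LGood B₂ ∧ LGood B₃ ∧ Disjoint B₁ B₂ ∧ Disjoint B₁ B₃ ∧
      Disjoint B₂ B₃ ∧ B₁ ∪ B₂ ∪ B₃ = A := by
  obtain ⟨C, D, hC, hD, hdisj, hun⟩ := two_split hA hinf
  have hor : C.Infinite ∨ D.Infinite := by
    rw [← hun] at hinf; exact Set.infinite_union.mp hinf
  rcases hor with h | h
  · obtain ⟨C₁, C₂, h1, h2, h3, h4⟩ := two_split hC.1 h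
    have hC₁ : C₁ ⊆ C := h4 ▸ subset_union_left
    have hC₂ : C₂ ⊆ C := h4 ▸ subset_union_right
    exact ⟨C₁, C₂, D, h1, h2, hD, h3, hdisj.mono_left hC₁, hdisj.mono_left hC₂,
      by rw [h4, hun]⟩
  · obtain ⟨D₁, D₂, h1, h2, h3, h4⟩ := two_split hD.1 h
    have hD₁ : D₁ ⊆ D := h4 ▸ subset_union_left
    have hD₂ : D₂ ⊆ D := h4 ▸ subset_union_right
    exact ⟨C, D₁, D₂, hC, h1, h2, (hdisj.mono_right hD₁), (hdisj.mono_right hD₂), h3,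
      by rw [union_assoc, h4, hun]⟩

lemma split_half {H : Set K} (hH : IsClopen H) (hne : H.Nonempty)
    (h : H.Infinite ∨ (H.Finite ∧ Even H.ncard)) :
    ∃ C D : Set K, LGood C ∧ LGood D ∧ Disjoint C D ∧ C ∪ D = H := by
  rcases h with h | ⟨hfin, hev⟩
  · exact two_split hH h
  · obtain ⟨c, hc⟩ := hne
    refine ⟨{c}, H \ {c}, lgood_singleton hH hfin hc, lgood_diff_even hH hfin hev hc,
      disjoint_sdiff_right, ?_⟩
    ext y; simp only [mem_union, mem_singleton_iff, mem_diff]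
    constructor
    · rintro (rfl | ⟨h1, _⟩); exacts [hc, h1]
    · intro hy; by_cases hyc : y = c
      · exact Or.inl hyc
      · exact Or.inr ⟨hy, hyc⟩

lemma three_split {A : Set K} (hA : LGood A) (hns : ∀ x, A ≠ {x}) :
    ∃ B₁ B₂ B₃ : Set K, LGood B₁ ∧ LGood B₂ ∧ LGood B₃ ∧ Disjoint B₁ B₂ ∧ Disjoint B₁ B₃ ∧
      Disjoint B₂ B₃ ∧ B₁ ∪ B₂ ∪ B₃ = A := by
  obtain ⟨hAc, hAne, hor⟩ := hA
  rcases hor with hinf | hodd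
  · exact three_split_infinite hAc hinf
  · have hfin : A.Finite := by
      by_contra h
      rw [Set.Infinite.ncard h] at hodd
      exact (Nat.not_odd_iff_even.mpr Even.zero) hodd
    have h1 : A.ncard ≠ 1 := by
      intro h
      obtain ⟨a, ha⟩ := Set.ncard_eq_one.mp h
      exact hns a ha
    have h3 : 3 ≤ A.ncard := by
      have hpos : 0 < A.ncard := (Set.ncard_pos hfin).2 hAne
      rcases hodd with ⟨k, hk⟩; omega
    obtain ⟨x, hx⟩ := hAne
    have hAx : (A \ {x}).Nonempty := by
      rw [← Set.ncard_pos (hfin.diff), Set.ncard_diff_singleton_of_mem hx]; omega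
    obtain ⟨y, hy⟩ := hAx
    have hxy : y ≠ x := by simpa using hy.2
    refine ⟨({x} : Set K), ({y} : Set K), ((A \ {x}) \ {y}), lgood_singleton hAc hfin hx,
      lgood_singleton hAc hfin hy.1, ?_, ?_, ?_, ?_, ?_⟩
    · refine ⟨((hAc.diff (isClopen_singleton_of_finite hAc hfin hx)).diff
        (isClopen_singleton_of_finite hAc hfin hy.1)), ?_, Or.inr ?_⟩
      · rw [← Set.ncard_pos (hfin.diff.diff),
          Set.ncard_diff_singleton_of_mem hy,
          Set.ncard_diff_singleton_of_mem hx]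
        omega
      · rw [Set.ncard_diff_singleton_of_mem hy,
          Set.ncard_diff_singleton_of_mem hx]
        have : A.ncard - 1 - 1 = A.ncard - 2 := by omega
        rw [this]
        exact Nat.Odd.sub_even (by omega) hodd (by norm_num)
    · simpa [Set.disjoint_singleton] using hxy.symm
    · exact Set.disjoint_singleton_left.mpr (fun h => h.1.2 rfl)
    · exact Set.disjoint_singleton_left.mpr (fun h => h.2 rfl)
    · ext z
      simp only [mem_union, mem_singleton_iff, mem_diff]
      constructor
      · rintro ((rfl | rfl) | ⟨⟨h, _⟩, _⟩); exacts [hx, hy.1, h]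
      · intro hz
        by_cases hzx : z = x
        · exact Or.inl (Or.inl hzx)
        · by_cases hzy : z = y
          · exact Or.inl (Or.inr hzy)
          · exact Or.inr ⟨⟨hz, hzx⟩, hzy⟩



lemma split_along {A U : Set K} (hA : LGood A) (hns : ∀ x, A ≠ {x}) (hU : IsClopen U) :
    ∃ B₁ B₂ B₃ : Set K, LGood B₁ ∧ LGood B₂ ∧ LGood B₃ ∧ Disjoint B₁ B₂ ∧ Disjoint B₁ B₃ ∧
      Disjoint B₂ B₃ ∧ B₁ ∪ B₂ ∪ B₃ = A ∧
      (B₁ ⊆ U ∨ B₁ ∩ U = ∅) ∧ (B₂ ⊆ U ∨ B₂ ∩ U = ∅) ∧ (B₃ ⊆ U ∨ B₃ ∩ U = ∅) := by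
  by_cases h1 : A ∩ U = ∅
  · obtain ⟨B₁, B₂, B₃, g1, g2, g3, d12, d13, d23, hun⟩ := three_split hA hns
    have hside : ∀ B : Set K, B ⊆ A → B ∩ U = ∅ := by
      intro B hB
      apply subset_empty_iff.mp
      rw [← h1]; exact inter_subset_inter_left _ hB
    have s1 : B₁ ⊆ A := hun ▸ (subset_union_left.trans subset_union_left)
    have s2 : B₂ ⊆ A := hun ▸ (subset_union_right.trans subset_union_left)
    have s3 : B₃ ⊆ A := hun ▸ subset_union_right
    exact ⟨B₁, B₂, B₃, g1, g2, g3, d12, d13, d23, hun,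
      Or.inr (hside _ s1), Or.inr (hside _ s2), Or.inr (hside _ s3)⟩
  by_cases h2 : A \ U = ∅
  · have hAU : A ⊆ U := by
      intro a ha
      by_contra hc
      exact (eq_empty_iff_forall_notMem.mp h2 a) ⟨ha, hc⟩
    obtain ⟨B₁, B₂, B₃, g1, g2, g3, d12, d13, d23, hun⟩ := three_split hA hns
    have s1 : B₁ ⊆ A := hun ▸ (subset_union_left.trans subset_union_left)
    have s2 : B₂ ⊆ A := hun ▸ (subset_union_right.trans subset_union_left)
    have s3 : B₃ ⊆ A := hun ▸ subset_union_right
    exact ⟨B₁, B₂, B₃, g1, g2, g3, d12, d13, d23, hun,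
      Or.inl (s1.trans hAU), Or.inl (s2.trans hAU), Or.inl (s3.trans hAU)⟩
  -- straddling case
  have hH1c : IsClopen (A ∩ U) := hA.1.inter hU
  have hH2c : IsClopen (A \ U) := hA.1.diff hU
  have hH1ne : (A ∩ U).Nonempty := nonempty_iff_ne_empty.mpr h1
  have hH2ne : (A \ U).Nonempty := nonempty_iff_ne_empty.mpr h2
  have hdisj : Disjoint (A ∩ U) (A \ U) :=
    Set.disjoint_left.mpr (by intro a ha hb; exact hb.2 ha.2)
  have hun : (A ∩ U) ∪ (A \ U) = A := inter_union_diff A U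
  have hsub1 : A ∩ U ⊆ U := inter_subset_right
  have hempty2 : ∀ B : Set K, B ⊆ A \ U → B ∩ U = ∅ := by
    intro B hB
    apply subset_empty_iff.mp
    intro z hz
    exact (hB hz.1).2 hz.2
  have key : (LGood (A ∩ U) ∧ ((A \ U).Infinite ∨ ((A \ U).Finite ∧ Even (A \ U).ncard))) ∨
      (LGood (A \ U) ∧ ((A ∩ U).Infinite ∨ ((A ∩ U).Finite ∧ Even (A ∩ U).ncard))) := by
    by_cases hf1 : (A ∩ U).Finite
    · by_cases hf2 : (A \ U).Finite
      · -- A finite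
        have hAfin : A.Finite := by rw [← hun]; exact hf1.union hf2
        have hAodd : Odd A.ncard := by
          rcases hA.2.2 with h | h
          · exact absurd hAfin h
          · exact h
        have hsum : A.ncard = (A ∩ U).ncard + (A \ U).ncard := by
          have := Set.ncard_union_eq hdisj hf1 hf2
          rw [hun] at this; exact this
        by_cases ho1 : Odd (A ∩ U).ncard
        · refine Or.inl ⟨⟨hH1c, hH1ne, Or.inr ho1⟩, Or.inr ⟨hf2, ?_⟩⟩
          rcases hAodd with ⟨a, ha⟩; rcases ho1 with ⟨b, hb⟩
          rcases Nat.even_or_odd (A \ U).ncard with h | ⟨c, hc⟩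
          · exact h
          · omega
        · refine Or.inr ⟨⟨hH2c, hH2ne, Or.inr ?_⟩, Or.inr ⟨hf1, Nat.not_odd_iff_even.mp ho1⟩⟩
          rcases hAodd with ⟨a, ha⟩
          rcases Nat.even_or_odd (A \ U).ncard with ⟨c, hc⟩ | h
          · rcases Nat.not_odd_iff_even.mp ho1 with ⟨b, hb⟩; omega
          · exact h
      · -- A \ U infinite
        by_cases ho1 : Odd (A ∩ U).ncard
        · exact Or.inl ⟨⟨hH1c, hH1ne, Or.inr ho1⟩, Or.inl (fun h => hf2 h)⟩
        · exact Or.inr ⟨⟨hH2c, hH2ne, Or.inl (fun h => hf2 h)⟩,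
            Or.inr ⟨hf1, Nat.not_odd_iff_even.mp ho1⟩⟩
    · -- A ∩ U infinite
      by_cases hf2 : (A \ U).Finite
      · by_cases ho2 : Odd (A \ U).ncard
        · exact Or.inr ⟨⟨hH2c, hH2ne, Or.inr ho2⟩, Or.inl (fun h => hf1 h)⟩
        · exact Or.inl ⟨⟨hH1c, hH1ne, Or.inl (fun h => hf1 h)⟩,
            Or.inr ⟨hf2, Nat.not_odd_iff_even.mp ho2⟩⟩
      · exact Or.inl ⟨⟨hH1c, hH1ne, Or.inl (fun h => hf1 h)⟩, Or.inl (fun h => hf2 h)⟩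
  rcases key with ⟨hg, hsp⟩ | ⟨hg, hsp⟩
  · -- keep A ∩ U, split A \ U
    obtain ⟨C, D, gC, gD, dCD, hCD⟩ := split_half hH2c hH2ne hsp
    have hCsub : C ⊆ A \ U := hCD ▸ subset_union_left
    have hDsub : D ⊆ A \ U := hCD ▸ subset_union_right
    refine ⟨A ∩ U, C, D, hg, gC, gD, hdisj.mono_right hCsub, hdisj.mono_right hDsub, dCD,
      ?_, Or.inl hsub1, Or.inr (hempty2 _ hCsub), Or.inr (hempty2 _ hDsub)⟩
    rw [union_assoc, hCD, hun]
  · -- keep A \ U, split A ∩ U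
    obtain ⟨C, D, gC, gD, dCD, hCD⟩ := split_half hH1c hH1ne hsp
    have hCsub : C ⊆ A ∩ U := hCD ▸ subset_union_left
    have hDsub : D ⊆ A ∩ U := hCD ▸ subset_union_right
    refine ⟨C, D, A \ U, gC, gD, hg, dCD, (hdisj.mono_left hCsub), (hdisj.mono_left hDsub),
      ?_, Or.inl (hCsub.trans hsub1), Or.inl (hDsub.trans hsub1), Or.inr (hempty2 _ le_rfl)⟩
    rw [hCD, hun]



/-- The invariant maintained by our partitions. -/
def LInv (P : Set (Set K)) : Prop :=
  IsFiniteClopenPartition P ∧ ∀ A ∈ P, A.Infinite ∨ Odd A.ncard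

lemma LInv.lgood {P : Set (Set K)} (hP : LInv P) {A : Set K} (hA : A ∈ P) : LGood A :=
  ⟨(hP.1.2.1 A hA).1, (hP.1.2.1 A hA).2, hP.2 A hA⟩

/-- One step of the construction. -/
lemma step_exists (K₀ : Set K) (hiso : ∀ x : K, IsOpen ({x} : Set K) → x ∈ K₀)
    (Q P : Set (Set K)) (hP : LInv P) {U : Set K} (hU : IsClopen U) :
    ∃ P' : Set (Set K), LInv P' ∧
      (∀ A ∈ P, (A ∈ P' ↔ ((∃ x, A = {x}) ∨ (A ∉ Q ∧ (A ∩ K₀).Nonempty)))) ∧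
      (∀ B ∈ P', ∃ A ∈ P, B ⊆ A) ∧
      (∀ A ∈ P, A ∉ P' →
        ∃ B₁ ∈ P', ∃ B₂ ∈ P', ∃ B₃ ∈ P',
          B₁ ≠ B₂ ∧ B₁ ≠ B₃ ∧ B₂ ≠ B₃ ∧ B₁.Nonempty ∧ B₂.Nonempty ∧ B₃.Nonempty ∧
          Disjoint B₁ B₂ ∧ Disjoint B₁ B₃ ∧ Disjoint B₂ B₃ ∧ A = B₁ ∪ B₂ ∪ B₃) ∧
      (∀ B ∈ P', B ∉ P → (B ⊆ U ∨ B ∩ U = ∅)) := by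
  classical
  set Ret : Set K → Prop := fun A => (∃ x, A = {x}) ∨ (A ∉ Q ∧ (A ∩ K₀).Nonempty) with hRet
  have hsplit : ∀ A : Set K, A ∈ P ∧ ¬Ret A →
      ∃ B₁ B₂ B₃ : Set K, LGood B₁ ∧ LGood B₂ ∧ LGood B₃ ∧ Disjoint B₁ B₂ ∧ Disjoint B₁ B₃ ∧
      Disjoint B₂ B₃ ∧ B₁ ∪ B₂ ∪ B₃ = A ∧
      (B₁ ⊆ U ∨ B₁ ∩ U = ∅) ∧ (B₂ ⊆ U ∨ B₂ ∩ U = ∅) ∧ (B₃ ⊆ U ∨ B₃ ∩ U = ∅) := by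
    rintro A ⟨hAP, hAR⟩
    have hns : ∀ x, A ≠ {x} := by
      intro x hx
      exact hAR (Or.inl ⟨x, hx⟩)
    exact split_along (hP.lgood hAP) hns hU
  choose f₁ f₂ f₃ hf using hsplit
  set F : Set K → Set (Set K) := fun A =>
    if h : A ∈ P ∧ ¬Ret A then {f₁ A h, f₂ A h, f₃ A h} else {A} with hF
  set P' : Set (Set K) := ⋃ A ∈ P, F A with hP'
  have hmem : ∀ B : Set K, B ∈ P' ↔ ∃ A ∈ P, B ∈ F A := by
    intro B; simp [hP', mem_iUnion]
  have hFpos : ∀ (A : Set K) (h : A ∈ P ∧ ¬Ret A), F A = {f₁ A h, f₂ A h, f₃ A h} :=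
    fun A h => dif_pos h
  have hFneg : ∀ (A : Set K), ¬(A ∈ P ∧ ¬Ret A) → F A = ({A} : Set (Set K)) :=
    fun A h => dif_neg h
  have hFsub : ∀ A : Set K, A ∈ P → ∀ B ∈ F A, B ⊆ A := by
    intro A hA B hB
    by_cases h : A ∈ P ∧ ¬Ret A
    · rw [hFpos A h] at hB
      have hu := (hf A h).2.2.2.2.2.2.1
      rcases hB with rfl | rfl | rfl
      · exact (subset_union_left.trans subset_union_left).trans hu.subset
      · exact (subset_union_right.trans subset_union_left).trans hu.subset
      · exact subset_union_right.trans hu.subset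
    · rw [hFneg A h, mem_singleton_iff] at hB
      exact hB ▸ le_rfl
  have hFgood : ∀ A : Set K, A ∈ P → ∀ B ∈ F A, LGood B := by
    intro A hA B hB
    by_cases h : A ∈ P ∧ ¬Ret A
    · rw [hFpos A h] at hB
      rcases hB with rfl | rfl | rfl
      · exact (hf A h).1
      · exact (hf A h).2.1
      · exact (hf A h).2.2.1
    · rw [hFneg A h, mem_singleton_iff] at hB
      exact hB ▸ hP.lgood hA
  have hFdisj : ∀ A : Set K, A ∈ P → ∀ B ∈ F A, ∀ B' ∈ F A, B ≠ B' → Disjoint B B' := by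
    intro A hA B hB B' hB' hne
    by_cases h : A ∈ P ∧ ¬Ret A
    · rw [hFpos A h] at hB hB'
      obtain ⟨_, _, _, d12, d13, d23, _, _⟩ := hf A h
      rcases hB with rfl | rfl | rfl <;> rcases hB' with rfl | rfl | rfl
      · exact absurd rfl hne
      · exact d12
      · exact d13
      · exact d12.symm
      · exact absurd rfl hne
      · exact d23
      · exact d13.symm
      · exact d23.symm
      · exact absurd rfl hne
    · rw [hFneg A h, mem_singleton_iff] at hB hB'
      exact absurd (hB.trans hB'.symm) hne
  have hFun : ∀ A : Set K, A ∈ P → ⋃₀ F A = A := by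
    intro A hA
    by_cases h : A ∈ P ∧ ¬Ret A
    · rw [hFpos A h]
      rw [sUnion_insert, sUnion_insert, sUnion_singleton, ← union_assoc]
      exact (hf A h).2.2.2.2.2.2.1
    · rw [hFneg A h]; exact sUnion_singleton _
  have hFne : ∀ A : Set K, A ∈ P → ∀ B ∈ F A, B.Nonempty := by
    intro A hA B hB
    exact (hFgood A hA B hB).2.1
  -- children are proper
  have hchild_ne : ∀ A : Set K, A ∈ P → ∀ (h : A ∈ P ∧ ¬Ret A), ∀ B ∈ F A, B ∈ P → False := by
    intro A hA h B hB hBP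
    have hBsub := hFsub A hA B hB
    have hBne := hFne A hA B hB
    by_cases hBA : B = A
    · subst hBA
      -- B = A : A is the union of three disjoint nonempty pieces, one of which is A itself
      rw [hFpos _ h] at hB
      obtain ⟨g1, g2, g3, d12, d13, d23, hu, _⟩ := hf _ h
      rcases hB with hB | hB | hB
      · have h2 : f₂ B h ⊆ B := (subset_union_right.trans subset_union_left).trans hu.subset
        have : f₂ B h = ∅ := by
          rw [← subset_empty_iff]
          intro z hz
          exact (Set.disjoint_left.mp d12 (hB ▸ h2 hz) hz).elim
        exact g2.2.1.ne_empty this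
      · have h2 : f₁ B h ⊆ B := (subset_union_left.trans subset_union_left).trans hu.subset
        have : f₁ B h = ∅ := by
          rw [← subset_empty_iff]
          intro z hz
          exact (Set.disjoint_left.mp d12 hz (hB ▸ h2 hz)).elim
        exact g1.2.1.ne_empty this
      · have h2 : f₁ B h ⊆ B := (subset_union_left.trans subset_union_left).trans hu.subset
        have : f₁ B h = ∅ := by
          rw [← subset_empty_iff]
          intro z hz
          exact (Set.disjoint_left.mp d13 hz (hB ▸ h2 hz)).elim
        exact g1.2.1.ne_empty this
    · have hd : Disjoint B A := hP.1.2.2.1 hBP hA hBA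
      obtain ⟨z, hz⟩ := hBne
      exact Set.disjoint_left.mp hd hz (hBsub hz)
  refine ⟨P', ⟨⟨?_, ?_, ?_, ?_⟩, ?_⟩, ?_, ?_, ?_, ?_⟩
  · -- finite
    apply Set.Finite.biUnion hP.1.1
    intro A hA
    by_cases h : A ∈ P ∧ ¬Ret A
    · rw [hFpos A h]; exact (finite_singleton _).insert _ |>.insert _
    · rw [hFneg A h]; exact finite_singleton _
  · -- clopen and nonempty
    intro B hB
    obtain ⟨A, hA, hBF⟩ := (hmem B).mp hB
    exact ⟨(hFgood A hA B hBF).1, (hFgood A hA B hBF).2.1⟩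
  · -- pairwise disjoint
    intro B hB B' hB' hne
    obtain ⟨A, hA, hBF⟩ := (hmem B).mp hB
    obtain ⟨A', hA', hBF'⟩ := (hmem B').mp hB'
    by_cases hAA : A = A'
    · subst hAA
      exact hFdisj A hA B hBF B' hBF' hne
    · exact Set.disjoint_of_subset (hFsub A hA B hBF) (hFsub A' hA' B' hBF')
        (hP.1.2.2.1 hA hA' hAA)
  · -- covers
    apply subset_antisymm (subset_univ _)
    intro z _
    have hzP : z ∈ ⋃₀ P := hP.1.2.2.2 ▸ mem_univ z
    obtain ⟨A, hA, hz⟩ := hzP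
    have : z ∈ ⋃₀ F A := (hFun A hA).symm ▸ hz
    obtain ⟨B, hBF, hzB⟩ := this
    exact ⟨B, (hmem B).mpr ⟨A, hA, hBF⟩, hzB⟩
  · -- good
    intro B hB
    obtain ⟨A, hA, hBF⟩ := (hmem B).mp hB
    exact (hFgood A hA B hBF).2.2
  · -- retention characterization
    intro A hA
    constructor
    · intro hAP'
      obtain ⟨A', hA', hBF⟩ := (hmem A).mp hAP'
      by_cases h : A' ∈ P ∧ ¬Ret A'
      · exact absurd hA (fun hc => (hchild_ne A' hA' h A hBF hc).elim)
      · rw [hFneg A' h, mem_singleton_iff] at hBF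
        subst hBF
        by_contra hc
        exact h ⟨hA', hc⟩
    · intro hRA
      apply (hmem A).mpr
      refine ⟨A, hA, ?_⟩
      rw [hFneg A (fun h => h.2 hRA), mem_singleton_iff]
  · -- refines
    intro B hB
    obtain ⟨A, hA, hBF⟩ := (hmem B).mp hB
    exact ⟨A, hA, hFsub A hA B hBF⟩
  · -- splitting
    intro A hA hAP'
    have h : A ∈ P ∧ ¬Ret A := by
      refine ⟨hA, fun hRA => hAP' ?_⟩
      apply (hmem A).mpr
      exact ⟨A, hA, by rw [hFneg A (fun hc => hc.2 hRA), mem_singleton_iff]⟩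
    obtain ⟨g1, g2, g3, d12, d13, d23, hu, _⟩ := hf A h
    have m1 : f₁ A h ∈ P' := (hmem _).mpr ⟨A, hA, by rw [hFpos A h]; exact Or.inl rfl⟩
    have m2 : f₂ A h ∈ P' := (hmem _).mpr ⟨A, hA,
      by rw [hFpos A h]; exact Or.inr (Or.inl rfl)⟩
    have m3 : f₃ A h ∈ P' := (hmem _).mpr ⟨A, hA,
      by rw [hFpos A h]; exact Or.inr (Or.inr rfl)⟩
    have ne12 : f₁ A h ≠ f₂ A h := by
      intro hc
      obtain ⟨z, hz⟩ := g1.2.1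
      exact Set.disjoint_left.mp d12 hz (hc ▸ hz)
    have ne13 : f₁ A h ≠ f₃ A h := by
      intro hc
      obtain ⟨z, hz⟩ := g1.2.1
      exact Set.disjoint_left.mp d13 hz (hc ▸ hz)
    have ne23 : f₂ A h ≠ f₃ A h := by
      intro hc
      obtain ⟨z, hz⟩ := g2.2.1
      exact Set.disjoint_left.mp d23 hz (hc ▸ hz)
    exact ⟨f₁ A h, m1, f₂ A h, m2, f₃ A h, m3, ne12, ne13, ne23,
      g1.2.1, g2.2.1, g3.2.1, d12, d13, d23, hu.symm⟩
  · -- new pieces lie on one side of U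
    intro B hB hBP
    obtain ⟨A, hA, hBF⟩ := (hmem B).mp hB
    by_cases h : A ∈ P ∧ ¬Ret A
    · rw [hFpos A h] at hBF
      obtain ⟨_, _, _, _, _, _, _, s1, s2, s3⟩ := hf A h
      rcases hBF with rfl | rfl | rfl
      · exact s1
      · exact s2
      · exact s3
    · rw [hFneg A h, mem_singleton_iff] at hBF
      exact absurd (hBF ▸ hA) hBP



end Aux

lemma exists_sep_family (K : Type*) [TopologicalSpace K] [CompactSpace K]
    [TopologicalSpace.MetrizableSpace K] [TotallyDisconnectedSpace K] [Nonempty K] :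
    ∃ U : ℕ → Set K, (∀ n, IsClopen (U n)) ∧ ∀ x y : K, x ≠ y → ∃ n, x ∈ U n ∧ y ∉ U n := by
  letI : MetricSpace K := TopologicalSpace.metrizableSpaceMetric K
  have hcov : ∀ k : ℕ, ∃ S : Set (Set K), S.Finite ∧
      (∀ V ∈ S, IsClopen V ∧ ∃ z : K, V ⊆ Metric.ball z (1 / (k + 1))) ∧ ⋃₀ S = univ := by
    intro k
    have hr : (0 : ℝ) < 1 / (k + 1) := by positivity
    have hx : ∀ x : K, ∃ V : Set K, IsClopen V ∧ x ∈ V ∧ V ⊆ Metric.ball x (1 / (k + 1)) :=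
      fun x => compact_exists_isClopen_in_isOpen Metric.isOpen_ball (Metric.mem_ball_self hr)
    choose c hc using hx
    obtain ⟨t, ht⟩ := isCompact_univ.elim_finite_subcover c (fun x => (hc x).1.2)
      (fun x _ => mem_iUnion.mpr ⟨x, (hc x).2.1⟩)
    refine ⟨c '' ↑t, (t.finite_toSet).image c, ?_, ?_⟩
    · rintro V ⟨x, _, rfl⟩
      exact ⟨(hc x).1, x, (hc x).2.2⟩
    · apply subset_antisymm (subset_univ _)
      intro z _
      obtain ⟨x, hxt, hz⟩ := mem_iUnion₂.mp (ht (mem_univ z))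
      exact ⟨c x, ⟨x, hxt, rfl⟩, hz⟩
  choose T hT1 hT2 hT3 using hcov
  have hScount : (⋃ k, T k).Countable := countable_iUnion (fun k => (hT1 k).countable)
  have hSne : (⋃ k, T k).Nonempty := by
    obtain ⟨x⟩ := ‹Nonempty K›
    have : x ∈ ⋃₀ T 0 := (hT3 0).symm ▸ mem_univ x
    obtain ⟨V, hV, _⟩ := this
    exact ⟨V, mem_iUnion.mpr ⟨0, hV⟩⟩
  obtain ⟨f, hf⟩ := hScount.exists_eq_range hSne
  refine ⟨f, ?_, ?_⟩
  · intro n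
    have : f n ∈ ⋃ k, T k := hf ▸ mem_range_self n
    obtain ⟨k, hk⟩ := mem_iUnion.mp this
    exact (hT2 k (f n) hk).1
  · intro x y hxy
    have hd : (0 : ℝ) < dist x y / 2 := by
      have := dist_pos.mpr hxy; linarith
    obtain ⟨k, hk⟩ := exists_nat_one_div_lt hd
    have : x ∈ ⋃₀ T k := (hT3 k).symm ▸ mem_univ x
    obtain ⟨V, hV, hxV⟩ := this
    obtain ⟨-, z, hz⟩ := hT2 k V hV
    have hVS : V ∈ ⋃ j, T j := mem_iUnion.mpr ⟨k, hV⟩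
    rw [hf] at hVS
    obtain ⟨n, rfl⟩ := hVS
    refine ⟨n, hxV, fun hyV => ?_⟩
    have h1 := hz hxV
    have h2 := hz hyV
    rw [Metric.mem_ball] at h1 h2
    have : dist x y ≤ dist x z + dist z y := dist_triangle x z y
    rw [dist_comm z y] at this
    have hkk : (1 : ℝ) / (k + 1) < dist x y / 2 := hk
    linarith


/-- Lemma `l.cantor`: for any pair `(K₀, K₁)` satisfying condition (*) with `K₁`
infinite, there exists a sequence of finite clopen partitions of `K₁` adapted to the
pair: `ξ 0 = {K₁}`, `ξ 1` has `2` or `4` elements, each `ξ (i+1)` refines `ξ i`, every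
element of `ξ i` (`i ≥ 1`) not retained in `ξ (i+1)` splits into exactly three distinct
nonempty elements of `ξ (i+1)`, an element of `ξ i` (`i ≥ 1`) meets `K₀` iff it belongs
to `ξ (i-1) ∪ ξ (i+1)`, and the sequence separates points. -/
theorem stmt16 (K₁ : Type*) [TopologicalSpace K₁] [CompactSpace K₁]
    [TopologicalSpace.MetrizableSpace K₁] [TotallyDisconnectedSpace K₁] [Infinite K₁]
    (K₀ : Set K₁) (hK₀ : IsClosed K₀)
    (hiso : ∀ x : K₁, IsOpen ({x} : Set K₁) → x ∈ K₀) :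
    ∃ ξ : ℕ → Set (Set K₁),
      (∀ i, IsFiniteClopenPartition (ξ i)) ∧
      ξ 0 = {Set.univ} ∧
      ((ξ 1).ncard = 2 ∨ (ξ 1).ncard = 4) ∧
      (∀ i, PartRefines (ξ i) (ξ (i + 1))) ∧
      (∀ i, 1 ≤ i → ∀ A ∈ ξ i, A ∉ ξ (i + 1) →
        ∃ B₁ ∈ ξ (i + 1), ∃ B₂ ∈ ξ (i + 1), ∃ B₃ ∈ ξ (i + 1),
          B₁ ≠ B₂ ∧ B₁ ≠ B₃ ∧ B₂ ≠ B₃ ∧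
          B₁.Nonempty ∧ B₂.Nonempty ∧ B₃.Nonempty ∧
          Disjoint B₁ B₂ ∧ Disjoint B₁ B₃ ∧ Disjoint B₂ B₃ ∧
          A = B₁ ∪ B₂ ∪ B₃) ∧
      (∀ i, 1 ≤ i → ∀ A ∈ ξ i,
        ((A ∩ K₀).Nonempty ↔ A ∈ ξ (i - 1) ∪ ξ (i + 1))) ∧
      (∀ x y : K₁, x ≠ y → ∃ i, ∀ A ∈ ξ i, x ∈ A → y ∉ A) := by
  classical
  haveI : Nonempty K₁ := inferInstance
  obtain ⟨U, hUclopen, hUsep⟩ := exists_sep_family K₁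
  obtain ⟨C, D, hC, hD, hCD, hCDun⟩ := two_split (A := (Set.univ : Set K₁)) isClopen_univ Set.infinite_univ
  have hCneD : C ≠ D := by
    rintro rfl
    obtain ⟨z, hz⟩ := hC.2.1
    exact Set.disjoint_left.mp hCD hz hz
  have hInv0 : LInv ({(univ : Set K₁)} : Set (Set K₁)) := by
    refine ⟨⟨finite_singleton _, ?_, ?_, ?_⟩, ?_⟩
    · intro A hA
      rw [mem_singleton_iff] at hA
      subst hA
      exact ⟨isClopen_univ, univ_nonempty⟩
    · exact pairwiseDisjoint_singleton _ _
    · exact sUnion_singleton _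
    · intro A hA
      rw [mem_singleton_iff] at hA
      subst hA
      exact Or.inl infinite_univ
  have hInv1 : LInv ({C, D} : Set (Set K₁)) := by
    refine ⟨⟨(finite_singleton D).insert C, ?_, ?_, ?_⟩, ?_⟩
    · intro A hA
      rcases hA with rfl | hA
      · exact ⟨hC.1, hC.2.1⟩
      · rw [mem_singleton_iff] at hA; subst hA
        exact ⟨hD.1, hD.2.1⟩
    · intro a ha b hb hne
      rcases ha with rfl | ha <;> rcases hb with rfl | hb
      · exact absurd rfl hne
      · rw [mem_singleton_iff] at hb; subst hb; exact hCD
      · rw [mem_singleton_iff] at ha; subst ha; exact hCD.symm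
      · rw [mem_singleton_iff] at ha hb; subst ha; subst hb; exact absurd rfl hne
    · rw [sUnion_insert, sUnion_singleton, hCDun]
    · intro A hA
      rcases hA with rfl | hA
      · exact hC.2.2
      · rw [mem_singleton_iff] at hA; subst hA; exact hD.2.2
  let St := {p : Set (Set K₁) × Set (Set K₁) // LInv p.2}
  let stepfun : ℕ → St → St := fun m p =>
    ⟨(p.1.2, Classical.choose (step_exists K₀ hiso p.1.1 p.1.2 p.2 (hUclopen (m / 2)))),
     (Classical.choose_spec (step_exists K₀ hiso p.1.1 p.1.2 p.2 (hUclopen (m / 2)))).1⟩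
  let chain : ℕ → St := fun n => Nat.rec (⟨(({univ} : Set (Set K₁)), ({C, D} : Set (Set K₁))), hInv1⟩ : St) stepfun n
  let ξ : ℕ → Set (Set K₁) := fun n => (chain n).1.1
  have hstep : ∀ n : ℕ, LInv (ξ (n + 2)) ∧
      (∀ A ∈ ξ (n + 1), (A ∈ ξ (n + 2) ↔
        ((∃ x, A = {x}) ∨ (A ∉ ξ n ∧ (A ∩ K₀).Nonempty)))) ∧
      (∀ B ∈ ξ (n + 2), ∃ A ∈ ξ (n + 1), B ⊆ A) ∧
      (∀ A ∈ ξ (n + 1), A ∉ ξ (n + 2) →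
        ∃ B₁ ∈ ξ (n + 2), ∃ B₂ ∈ ξ (n + 2), ∃ B₃ ∈ ξ (n + 2),
          B₁ ≠ B₂ ∧ B₁ ≠ B₃ ∧ B₂ ≠ B₃ ∧ B₁.Nonempty ∧ B₂.Nonempty ∧ B₃.Nonempty ∧
          Disjoint B₁ B₂ ∧ Disjoint B₁ B₃ ∧ Disjoint B₂ B₃ ∧ A = B₁ ∪ B₂ ∪ B₃) ∧
      (∀ B ∈ ξ (n + 2), B ∉ ξ (n + 1) → (B ⊆ U (n / 2) ∨ B ∩ U (n / 2) = ∅)) := by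
    intro n
    exact Classical.choose_spec
      (step_exists K₀ hiso (chain n).1.1 (chain n).1.2 (chain n).2 (hUclopen (n / 2)))
  have hLInv : ∀ n, LInv (ξ n) := by
    intro n
    match n with
    | 0 => exact hInv0
    | 1 => exact hInv1
    | (m + 2) => exact (hstep m).1
  have hsingleton_meets : ∀ (x : K₁) (m : ℕ), ({x} : Set K₁) ∈ ξ m → (({x} : Set K₁) ∩ K₀).Nonempty := by
    intro x m hx
    have hcl : IsClopen ({x} : Set K₁) := ((hLInv m).1.2.1 _ hx).1
    exact ⟨x, rfl, hiso x hcl.2⟩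
  refine ⟨ξ, fun i => (hLInv i).1, rfl, Or.inl (Set.ncard_pair hCneD), ?_, ?_, ?_, ?_⟩
  · -- refinement
    intro i
    match i with
    | 0 =>
      intro A _
      exact ⟨univ, mem_singleton _, subset_univ A⟩
    | (n + 1) => exact (hstep n).2.2.1
  · -- three-splitting
    intro i hi A hA hnA
    obtain ⟨n, rfl⟩ : ∃ n, i = n + 1 := ⟨i - 1, by omega⟩
    exact (hstep n).2.2.2.1 A hA hnA
  · -- K₀ condition
    intro i hi A hA
    obtain ⟨n, rfl⟩ : ∃ n, i = n + 1 := ⟨i - 1, by omega⟩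
    have hsucc : n + 1 - 1 = n := rfl
    rw [hsucc]
    constructor
    · intro hmeet
      by_cases hn : A ∈ ξ n
      · exact mem_union_left _ hn
      · exact mem_union_right _ (((hstep n).2.1 A hA).mpr (Or.inr ⟨hn, hmeet⟩))
    · intro hmem
      rcases hmem with hmem | hmem
      · -- A ∈ ξ n and A ∈ ξ (n + 1)
        cases n with
        | zero =>
          exfalso
          have hAu : A = univ := mem_singleton_iff.mp hmem
          have hA' : A ∈ ({C, D} : Set (Set K₁)) := hA
          rcases hA' with h | h
          · have hCu : C = univ := h ▸ hAu
            obtain ⟨z, hz⟩ := hD.2.1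
            have hzC : z ∈ C := by rw [hCu]; exact mem_univ z
            exact Set.disjoint_left.mp hCD hzC hz
          · rw [mem_singleton_iff] at h
            have hDu : D = univ := h ▸ hAu
            obtain ⟨z, hz⟩ := hC.2.1
            have hzD : z ∈ D := by rw [hDu]; exact mem_univ z
            exact Set.disjoint_left.mp hCD hz hzD
        | succ m =>
          rcases ((hstep m).2.1 A hmem).mp hA with ⟨x, rfl⟩ | ⟨_, hm⟩
          · exact hsingleton_meets x (m + 1) hmem
          · exact hm
      · -- A ∈ ξ (n + 2)
        rcases ((hstep n).2.1 A hA).mp hmem with ⟨x, rfl⟩ | ⟨_, hm⟩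
        · exact hsingleton_meets x (n + 1) hA
        · exact hm
  · -- separation
    intro x y hxy
    obtain ⟨n, hxn, hyn⟩ := hUsep x y hxy
    refine ⟨2 * n + 3, ?_⟩
    have e1 : (2 * n + 1) / 2 = n := by omega
    have e2 : (2 * n) / 2 = n := by omega
    have hside : ∀ B ∈ ξ (2 * n + 3), B ⊆ U n ∨ B ∩ U n = ∅ := by
      intro B hB
      by_cases h1 : B ∈ ξ (2 * n + 2)
      · rcases ((hstep (2 * n + 1)).2.1 B h1).mp hB with ⟨x₀, rfl⟩ | ⟨hnew, _⟩
        · by_cases hx₀ : x₀ ∈ U n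
          · exact Or.inl (singleton_subset_iff.mpr hx₀)
          · refine Or.inr ?_
            apply eq_empty_iff_forall_notMem.mpr
            rintro z ⟨hz1, hz2⟩
            rw [mem_singleton_iff] at hz1
            subst hz1
            exact hx₀ hz2
        · have := (hstep (2 * n)).2.2.2.2 B h1 hnew
          rw [e2] at this
          exact this
      · have := (hstep (2 * n + 1)).2.2.2.2 B hB h1
        rw [e1] at this
        exact this
    intro A hA hxA hyA
    rcases hside A hA with h | h
    · exact hyn (h hyA)
    · exact (eq_empty_iff_forall_notMem.mp h x) ⟨hxA, hxn⟩
end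

section
/- Let K₀ ⊆ K₁ be as in condition (*) with K₁ infinite, let ξ and μ be finite partitions of K₁ by clopen sets such that every finite element of ξ is a singleton. Then there exist finite partitions by clopen sets ξ₀ = ξ ≺ ξ₁ ≺ ⋯ ≺ ξ_n such that: whenever A ∈ ξ_i \ ξ_{i+1}, A is the disjoint union of three distinct nonempty elements of ξ_{i+1}; for A ∈ ξ_i, A ∩ K₀ ≠ ∅ iff A ∈ ξ_{i−1} ∪ ξ_{i+1} (with ξ_{−1} = ξ_{n+1} = ∅); μ ≺ ξ_n; and all finite elements of ξ_n are singletons. -/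
set_option linter.unusedSectionVars false
set_option maxHeartbeats 1000000


open Set

section Aux
variable {K : Type*} [TopologicalSpace K] [T2Space K] [TotallySeparatedSpace K]

lemma isolated_of_finite_clopen {C : Set K} (hC : IsClopen C) (hf : C.Finite) {x : K}
    (hx : x ∈ C) : IsOpen ({x} : Set K) := by
  have h1 : IsClosed (C \ {x}) := (hf.diff : (C \ {x}).Finite).isClosed
  have h2 : ({x} : Set K) = C \ (C \ {x}) := by
    ext y
    constructor
    · rintro rfl
      exact ⟨hx, fun h => h.2 rfl⟩
    · rintro ⟨hyC, hy⟩
      by_contra hne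
      exact hy ⟨hyC, hne⟩
  rw [h2]
  exact hC.isOpen.sdiff h1

lemma clopen_singleton_of_open {x : K} (h : IsOpen ({x} : Set K)) : IsClopen ({x} : Set K) :=
  ⟨isClosed_singleton, h⟩

lemma split2' {C : Set K} (hC : IsClopen C) {x y : K} (hx : x ∈ C) (hy : y ∈ C) (hxy : x ≠ y) :
    ∃ B₁ B₂ : Set K, IsClopen B₁ ∧ IsClopen B₂ ∧ B₁.Nonempty ∧ B₂.Nonempty ∧
      Disjoint B₁ B₂ ∧ C = B₁ ∪ B₂ := by
  obtain ⟨U, hU, hxU, hyU⟩ := exists_isClopen_of_totally_separated hxy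
  refine ⟨C ∩ U, C \ U, hC.inter hU, hC.diff hU, ⟨x, hx, hxU⟩, ⟨y, hy, hyU⟩, ?_, ?_⟩
  · rw [Set.disjoint_left]
    rintro a ⟨-, haU⟩ ⟨-, haU'⟩
    exact haU' haU
  · exact (Set.inter_union_diff C U).symm

lemma split2good {C : Set K} (hC : IsClopen C) (hinf : C.Infinite) :
    ∃ B₁ B₂ : Set K, IsClopen B₁ ∧ IsClopen B₂ ∧ B₁.Nonempty ∧ B₂.Nonempty ∧
      Disjoint B₁ B₂ ∧ C = B₁ ∪ B₂ ∧ (B₁.Finite → ∃ z, B₁ = {z}) ∧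
      (B₂.Finite → ∃ z, B₂ = {z}) := by
  by_cases hiso : ∃ x ∈ C, IsOpen ({x} : Set K)
  · obtain ⟨x, hx, hxo⟩ := hiso
    refine ⟨{x}, C \ {x}, clopen_singleton_of_open hxo, hC.diff (clopen_singleton_of_open hxo),
      singleton_nonempty x, (hinf.diff (finite_singleton x)).nonempty, ?_, ?_,
      fun _ => ⟨x, rfl⟩, fun hfin => absurd hfin (hinf.diff (finite_singleton x))⟩
    · rw [Set.disjoint_left]
      rintro a ha ⟨-, ha'⟩
      exact ha' ha
    · exact (Set.union_diff_cancel (singleton_subset_iff.2 hx)).symm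
  · push_neg at hiso
    obtain ⟨x, hx, y, hy, hxy⟩ := hinf.nontrivial
    obtain ⟨B₁, B₂, h1, h2, hn1, hn2, hd, hu⟩ := split2' hC hx hy hxy
    have key : ∀ B : Set K, IsClopen B → B ⊆ C → B.Nonempty → B.Finite → False := by
      intro B hB hBC hBne hBf
      obtain ⟨z, hz⟩ := hBne
      exact hiso z (hBC hz) (isolated_of_finite_clopen hB hBf hz)
    refine ⟨B₁, B₂, h1, h2, hn1, hn2, hd, hu, ?_, ?_⟩
    · exact fun hfin => absurd (key B₁ h1 (hu ▸ subset_union_left) hn1 hfin) (by simp)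
    · exact fun hfin => absurd (key B₂ h2 (hu ▸ subset_union_right) hn2 hfin) (by simp)

lemma split3her {C : Set K} (hC : IsClopen C) (hne : C.Nonempty)
    (hher : ∀ B, B ⊆ C → IsClopen B → B.Nonempty → B.Infinite) :
    ∃ B₁ B₂ B₃ : Set K, IsClopen B₁ ∧ IsClopen B₂ ∧ IsClopen B₃ ∧
      B₁.Nonempty ∧ B₂.Nonempty ∧ B₃.Nonempty ∧
      Disjoint B₁ B₂ ∧ Disjoint B₁ B₃ ∧ Disjoint B₂ B₃ ∧ C = B₁ ∪ B₂ ∪ B₃ := by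
  have hinf : C.Infinite := hher C Subset.rfl hC hne
  obtain ⟨x, hx, y, hy, hxy⟩ := hinf.nontrivial
  obtain ⟨D₁, D₂, hD1, hD2, hn1, hn2, hd, hu⟩ := split2' hC hx hy hxy
  have hD2C : D₂ ⊆ C := hu ▸ subset_union_right
  have hD2inf : D₂.Infinite := hher D₂ hD2C hD2 hn2
  obtain ⟨z, hz, w, hw, hzw⟩ := hD2inf.nontrivial
  obtain ⟨B₂, B₃, hB2, hB3, hn2', hn3', hd', hu'⟩ := split2' hD2 hz hw hzw
  refine ⟨D₁, B₂, B₃, hD1, hB2, hB3, hn1, hn2', hn3', ?_, ?_, hd', by rw [hu, hu', union_assoc]⟩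
  · exact hd.mono_right (hu' ▸ subset_union_left)
  · exact hd.mono_right (hu' ▸ subset_union_right)

end Aux

section Machine
open scoped Classical

variable {K : Type*} [TopologicalSpace K]

/-- `B` is a decomposition of `C` into three disjoint nonempty clopen pieces. -/
def Trip (C : Set K) (B : Set K × Set K × Set K) : Prop :=
  IsClopen B.1 ∧ IsClopen B.2.1 ∧ IsClopen B.2.2 ∧
    B.1.Nonempty ∧ B.2.1.Nonempty ∧ B.2.2.Nonempty ∧
    Disjoint B.1 B.2.1 ∧ Disjoint B.1 B.2.2 ∧ Disjoint B.2.1 B.2.2 ∧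
    C = B.1 ∪ B.2.1 ∪ B.2.2

/-- A choice of a 3-splitting of `C` (when one exists). -/
noncomputable def sp3 (C : Set K) : Set (Set K) :=
  if h : ∃ B, Trip C B then {h.choose.1, h.choose.2.1, h.choose.2.2} else {C}

lemma sp3_spec {C : Set K} (h : ∃ B, Trip C B) :
    ∃ B₁ B₂ B₃ : Set K, sp3 C = {B₁, B₂, B₃} ∧ Trip C (B₁, B₂, B₃) := by
  rw [sp3, dif_pos h]
  exact ⟨_, _, _, rfl, h.choose_spec⟩

lemma sp3_finite (C : Set K) : (sp3 C).Finite := by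
  rw [sp3]
  split
  · exact (Set.finite_singleton _).insert _ |>.insert _
  · exact Set.finite_singleton _

/-- Split every member of a family into three pieces. -/
noncomputable def cStep (T : Set (Set K)) : Set (Set K) := ⋃ C ∈ T, sp3 C

/-- `T` is a finite partition of `A` into nonempty clopen sets. -/
def PartOf (A : Set K) (T : Set (Set K)) : Prop :=
  T.Finite ∧ (∀ B ∈ T, IsClopen B ∧ B.Nonempty) ∧ T.PairwiseDisjoint id ∧ ⋃₀ T = A

lemma partOf_singleton {A : Set K} (hA : IsClopen A) (hne : A.Nonempty) :
    PartOf A {A} := by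
  refine ⟨finite_singleton _, ?_, ?_, ?_⟩
  · rintro B rfl
    exact ⟨hA, hne⟩
  · exact Set.pairwiseDisjoint_singleton _ _
  · simp

/-- The evolving-partition package: all the per-element data needed
for one member of the original partition. -/
structure Pack (K₀ : Set K) (μ : Set (Set K)) (A : Set K) (P : ℕ → Set (Set K)) (d : ℕ) :
    Prop where
  done_pos : 1 ≤ d
  init : P 0 = {A}
  part : ∀ i, PartOf A (P i)
  refine : ∀ i, ∀ E ∈ P (i + 1), ∃ F ∈ P i, E ⊆ F ∧ (E = F → (F ∩ K₀).Nonempty)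
  split : ∀ i, ∀ F ∈ P i, F ∉ P (i + 1) →
    ∃ B₁ ∈ P (i + 1), ∃ B₂ ∈ P (i + 1), ∃ B₃ ∈ P (i + 1),
      B₁ ≠ B₂ ∧ B₁ ≠ B₃ ∧ B₂ ≠ B₃ ∧
      B₁.Nonempty ∧ B₂.Nonempty ∧ B₃.Nonempty ∧
      Disjoint B₁ B₂ ∧ Disjoint B₁ B₃ ∧ Disjoint B₂ B₃ ∧ F = B₁ ∪ B₂ ∪ B₃
  persist : ∀ i, ∀ F ∈ P i, (F ∩ K₀).Nonempty → F ∈ P (i + 1) ∨ (1 ≤ i ∧ F ∈ P (i - 1))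
  old : ∀ i, d ≤ i → ∀ F ∈ P i, (F ∩ K₀).Nonempty → F ∈ P (i - 1)
  final : ∀ i, d ≤ i → ∀ F ∈ P i, (∃ M ∈ μ, F ⊆ M) ∧ (F.Finite → ∃ x, F = {x})

variable {K₀ : Set K}

lemma ne_of_disjoint {B B' : Set K} (hd : Disjoint B B') (hne : B.Nonempty) : B ≠ B' := by
  rintro rfl
  rw [disjoint_self] at hd
  exact hne.ne_empty hd

end Machine

section WithK0
variable {K : Type*} [TopologicalSpace K] [T2Space K] [TotallySeparatedSpace K]
variable {K₀ : Set K} {μ : Set (Set K)}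

lemma miss_infinite (hiso : ∀ x : K, IsOpen ({x} : Set K) → x ∈ K₀) {C : Set K}
    (hC : IsClopen C) (hne : C.Nonempty) (hm : C ∩ K₀ = ∅) : C.Infinite := by
  by_contra h
  rw [Set.not_infinite] at h
  obtain ⟨x, hx⟩ := hne
  have h1 := isolated_of_finite_clopen hC h hx
  have h2 : x ∈ C ∩ K₀ := ⟨hx, hiso x h1⟩
  rw [hm] at h2
  exact h2

lemma sp3_miss (hiso : ∀ x : K, IsOpen ({x} : Set K) → x ∈ K₀) {C : Set K}
    (hC : IsClopen C) (hne : C.Nonempty) (hm : C ∩ K₀ = ∅) :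
    ∃ B₁ B₂ B₃ : Set K, sp3 C = {B₁, B₂, B₃} ∧ Trip C (B₁, B₂, B₃) := by
  apply sp3_spec
  have hher : ∀ B, B ⊆ C → IsClopen B → B.Nonempty → B.Infinite := by
    intro B hBC hB hBne
    apply miss_infinite hiso hB hBne
    apply eq_empty_of_subset_empty
    calc B ∩ K₀ ⊆ C ∩ K₀ := inter_subset_inter_left _ hBC
      _ = ∅ := hm
  obtain ⟨B₁, B₂, B₃, h1, h2, h3, n1, n2, n3, d12, d13, d23, hu⟩ := split3her hC hne hher
  exact ⟨(B₁, B₂, B₃), h1, h2, h3, n1, n2, n3, d12, d13, d23, hu⟩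

lemma trip_mem_props {C B₁ B₂ B₃ : Set K} (h : Trip C (B₁, B₂, B₃)) :
    ∀ E ∈ ({B₁, B₂, B₃} : Set (Set K)), IsClopen E ∧ E.Nonempty ∧ E ⊆ C ∧ E ≠ C := by
  obtain ⟨h1, h2, h3, n1, n2, n3, d12, d13, d23, hu⟩ := h
  have key : ∀ E B' : Set K, B' ⊆ C → B'.Nonempty → Disjoint E B' → E ≠ C := by
    intro E B' hsub hne hd hEC
    obtain ⟨z, hz⟩ := hne
    exact Set.disjoint_left.mp hd (hEC ▸ hsub hz) hz
  have s1 : B₁ ⊆ C := hu ▸ (subset_union_left.trans subset_union_left)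
  have s2 : B₂ ⊆ C := hu ▸ (subset_union_right.trans subset_union_left)
  have s3 : B₃ ⊆ C := hu ▸ subset_union_right
  intro E hE
  simp only [Set.mem_insert_iff, Set.mem_singleton_iff] at hE
  rcases hE with rfl | rfl | rfl
  · exact ⟨h1, n1, s1, key _ _ s2 n2 d12⟩
  · exact ⟨h2, n2, s2, key _ _ s1 n1 d12.symm⟩
  · exact ⟨h3, n3, s3, key _ _ s1 n1 d13.symm⟩

lemma trip_pdisj {C B₁ B₂ B₃ : Set K} (h : Trip C (B₁, B₂, B₃)) :
    ({B₁, B₂, B₃} : Set (Set K)).PairwiseDisjoint id := by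
  obtain ⟨h1, h2, h3, n1, n2, n3, d12, d13, d23, hu⟩ := h
  intro a ha b hb hab
  simp only [Set.mem_insert_iff, Set.mem_singleton_iff] at ha hb
  rcases ha with rfl | rfl | rfl <;> rcases hb with rfl | rfl | rfl <;>
    first
      | exact absurd rfl hab
      | exact d12 | exact d12.symm | exact d13 | exact d13.symm | exact d23 | exact d23.symm

lemma trip_sUnion {C B₁ B₂ B₃ : Set K} (h : Trip C (B₁, B₂, B₃)) :
    ⋃₀ ({B₁, B₂, B₃} : Set (Set K)) = C := by
  rw [Set.sUnion_insert, Set.sUnion_insert, Set.sUnion_singleton, ← Set.union_assoc]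
  exact h.2.2.2.2.2.2.2.2.2.symm

lemma mem_cStep {T : Set (Set K)} {E : Set K} :
    E ∈ cStep T ↔ ∃ C ∈ T, E ∈ sp3 C := by
  simp [cStep]

lemma cStep_spec (hiso : ∀ x : K, IsOpen ({x} : Set K) → x ∈ K₀) {A : Set K} {T : Set (Set K)}
    (hm : A ∩ K₀ = ∅) (hT : PartOf A T) :
    PartOf A (cStep T) ∧
    (∀ E ∈ cStep T, ∃ C ∈ T, E ⊆ C ∧ E ≠ C) ∧
    (∀ C ∈ T, ∃ B₁ ∈ cStep T, ∃ B₂ ∈ cStep T, ∃ B₃ ∈ cStep T,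
      B₁ ≠ B₂ ∧ B₁ ≠ B₃ ∧ B₂ ≠ B₃ ∧ B₁.Nonempty ∧ B₂.Nonempty ∧ B₃.Nonempty ∧
      Disjoint B₁ B₂ ∧ Disjoint B₁ B₃ ∧ Disjoint B₂ B₃ ∧ C = B₁ ∪ B₂ ∪ B₃) := by
  obtain ⟨hfin, hmem, hpd, hcov⟩ := hT
  have hsubA : ∀ C ∈ T, C ⊆ A := fun C hC => hcov ▸ Set.subset_sUnion_of_mem hC
  have hmiss : ∀ C ∈ T, C ∩ K₀ = ∅ := by
    intro C hC
    apply eq_empty_of_subset_empty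
    calc C ∩ K₀ ⊆ A ∩ K₀ := inter_subset_inter_left _ (hsubA C hC)
      _ = ∅ := hm
  have hsp : ∀ C ∈ T, ∃ B₁ B₂ B₃ : Set K, sp3 C = {B₁, B₂, B₃} ∧ Trip C (B₁, B₂, B₃) :=
    fun C hC => sp3_miss hiso (hmem C hC).1 (hmem C hC).2 (hmiss C hC)
  have hrefine : ∀ E ∈ cStep T, ∃ C ∈ T, E ⊆ C ∧ E ≠ C := by
    intro E hE
    obtain ⟨C, hC, hEC⟩ := mem_cStep.mp hE
    obtain ⟨B₁, B₂, B₃, heq, htrip⟩ := hsp C hC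
    obtain ⟨-, -, hsub, hne⟩ := trip_mem_props htrip E (heq ▸ hEC)
    exact ⟨C, hC, hsub, hne⟩
  refine ⟨⟨?_, ?_, ?_, ?_⟩, hrefine, ?_⟩
  · exact Set.Finite.biUnion hfin (fun C _ => sp3_finite C)
  · intro E hE
    obtain ⟨C, hC, hEC⟩ := mem_cStep.mp hE
    obtain ⟨B₁, B₂, B₃, heq, htrip⟩ := hsp C hC
    obtain ⟨hcl, hne, -, -⟩ := trip_mem_props htrip E (heq ▸ hEC)
    exact ⟨hcl, hne⟩
  · intro a ha b hb hab
    obtain ⟨Ca, hCa, haC⟩ := mem_cStep.mp ha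
    obtain ⟨Cb, hCb, hbC⟩ := mem_cStep.mp hb
    by_cases hC : Ca = Cb
    · subst hC
      obtain ⟨B₁, B₂, B₃, heq, htrip⟩ := hsp Ca hCa
      exact trip_pdisj htrip (heq ▸ haC) (heq ▸ hbC) hab
    · obtain ⟨Ba1, Ba2, Ba3, heqa, htripa⟩ := hsp Ca hCa
      obtain ⟨Bb1, Bb2, Bb3, heqb, htripb⟩ := hsp Cb hCb
      have hsa := (trip_mem_props htripa a (heqa ▸ haC)).2.2.1
      have hsb := (trip_mem_props htripb b (heqb ▸ hbC)).2.2.1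
      exact Set.disjoint_of_subset hsa hsb (hpd hCa hCb hC)
  · ext x
    simp only [Set.mem_sUnion]
    constructor
    · rintro ⟨E, hE, hxE⟩
      obtain ⟨C, hC, hsub, -⟩ := hrefine E hE
      exact hcov ▸ ⟨C, hC, hsub hxE⟩
    · intro hx
      rw [← hcov] at hx
      obtain ⟨C, hC, hxC⟩ := hx
      obtain ⟨B₁, B₂, B₃, heq, htrip⟩ := hsp C hC
      have : x ∈ ⋃₀ ({B₁, B₂, B₃} : Set (Set K)) := (trip_sUnion htrip).symm ▸ hxC
      obtain ⟨E, hE, hxE⟩ := this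
      exact ⟨E, mem_cStep.mpr ⟨C, hC, heq ▸ hE⟩, hxE⟩
  · intro C hC
    obtain ⟨B₁, B₂, B₃, heq, htrip⟩ := hsp C hC
    obtain ⟨-, -, -, n1, n2, n3, d12, d13, d23, hu⟩ := htrip
    have m1 : B₁ ∈ cStep T := mem_cStep.mpr ⟨C, hC, heq ▸ by simp⟩
    have m2 : B₂ ∈ cStep T := mem_cStep.mpr ⟨C, hC, heq ▸ by simp⟩
    have m3 : B₃ ∈ cStep T := mem_cStep.mpr ⟨C, hC, heq ▸ by simp⟩
    exact ⟨B₁, m1, B₂, m2, B₃, m3, ne_of_disjoint d12 n1, ne_of_disjoint d13 n1,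
      ne_of_disjoint d23 n2, n1, n2, n3, d12, d13, d23, hu⟩

/-- The constant package: a set meeting `K₀`, contained in a `μ`-element, all of whose
finite subsets are singletons, is simply kept forever. -/
lemma pack_keep {A : Set K} (hA : IsClopen A) (hne : A.Nonempty)
    (hmeet : (A ∩ K₀).Nonempty) (hM : ∃ M ∈ μ, A ⊆ M) (hfs : A.Finite → ∃ x, A = {x}) :
    Pack K₀ μ A (fun _ => {A}) 1 where
  done_pos := le_refl 1
  init := rfl
  part := fun _ => partOf_singleton hA hne
  refine := fun i E hE => ⟨A, rfl, le_of_eq hE, fun _ => hmeet⟩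
  split := fun i F hF hnF => absurd hF hnF
  persist := fun i F hF _ => Or.inl hF
  old := fun i _ F hF _ => hF
  final := by
    intro i _ F hF
    rw [Set.mem_singleton_iff] at hF
    rw [hF]
    exact ⟨hM, hfs⟩

/-- The cascade package: a set missing `K₀` is split into three pieces at every stage. -/
lemma pack_cascade (hiso : ∀ x : K, IsOpen ({x} : Set K) → x ∈ K₀) {A : Set K}
    (hA : IsClopen A) (hne : A.Nonempty) (hm : A ∩ K₀ = ∅) (hM : ∃ M ∈ μ, A ⊆ M) :
    Pack K₀ μ A (fun i => cStep^[i] {A}) 1 := by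
  have hpart : ∀ i, PartOf A (cStep^[i] {A}) := by
    intro i
    induction i with
    | zero => exact partOf_singleton hA hne
    | succ n ih =>
      rw [Function.iterate_succ_apply']
      exact (cStep_spec hiso hm ih).1
  have hmissall : ∀ i, ∀ F ∈ cStep^[i] {A}, F ∩ K₀ = ∅ := by
    intro i F hF
    apply eq_empty_of_subset_empty
    have hsub : F ⊆ A := (hpart i).2.2.2 ▸ Set.subset_sUnion_of_mem hF
    calc F ∩ K₀ ⊆ A ∩ K₀ := inter_subset_inter_left _ hsub
      _ = ∅ := hm
  have hstep : ∀ i, cStep^[i+1] {A} = cStep (cStep^[i] {A}) :=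
    fun i => Function.iterate_succ_apply' _ _ _
  refine ⟨le_refl 1, by simp, hpart, ?_, ?_, ?_, ?_, ?_⟩
  · intro i E hE
    rw [hstep i] at hE
    obtain ⟨C, hC, hsub, hne'⟩ := (cStep_spec hiso hm (hpart i)).2.1 E hE
    exact ⟨C, hC, hsub, fun h => absurd h hne'⟩
  · intro i F hF _
    rw [hstep i]
    exact (cStep_spec hiso hm (hpart i)).2.2 F hF
  · intro i F hF hmeet
    rw [hmissall i F hF] at hmeet
    exact absurd hmeet (by simp)
  · intro i _ F hF hmeet
    rw [hmissall i F hF] at hmeet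
    exact absurd hmeet (by simp)
  · intro i _ F hF
    obtain ⟨M, hMμ, hAM⟩ := hM
    have hsub : F ⊆ A := (hpart i).2.2.2 ▸ Set.subset_sUnion_of_mem hF
    refine ⟨⟨M, hMμ, hsub.trans hAM⟩, fun hfin => ?_⟩
    have hinf := miss_infinite hiso ((hpart i).2.1 F hF).1 ((hpart i).2.1 F hF).2
      (hmissall i F hF)
    exact absurd hfin hinf

end WithK0

section Comp
variable {K : Type*} [TopologicalSpace K]
variable {K₀ : Set K} {μ : Set (Set K)}

/-- Composing three packages under a common root. -/
lemma pack_comp {A : Set K} {B : Fin 3 → Set K} {P : Fin 3 → ℕ → Set (Set K)} {d : Fin 3 → ℕ}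
    (hp : ∀ j, Pack K₀ μ (B j) (P j) (d j))
    (hdisj : ∀ j l, j ≠ l → Disjoint (B j) (B l))
    (hA : A = B 0 ∪ B 1 ∪ B 2) :
    ∃ Q D, Pack K₀ μ A Q D := by
  obtain ⟨s, hs1, hsm⟩ : ∃ s : ℕ, s ≤ 1 ∧ (s = 1 ↔ (A ∩ K₀).Nonempty) := by
    by_cases h : (A ∩ K₀).Nonempty
    · exact ⟨1, le_refl _, by simp [h]⟩
    · exact ⟨0, by omega, by simp [h]⟩
  have hBcl : ∀ j, IsClopen (B j) ∧ (B j).Nonempty := by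
    intro j
    exact ((hp j).part 0).2.1 (B j) (by rw [(hp j).init]; rfl)
  have hsubBA : ∀ j, B j ⊆ A := by
    intro j
    rw [hA]
    fin_cases j
    · exact subset_union_left.trans subset_union_left
    · exact subset_union_right.trans subset_union_left
    · exact subset_union_right
  have hAcl : IsClopen A := by
    rw [hA]
    exact (((hBcl 0).1.union (hBcl 1).1).union (hBcl 2).1)
  have hAne : A.Nonempty := ((hBcl 0).2).mono (hsubBA 0)
  have hex : ∀ j : Fin 3, ∃ l : Fin 3, j ≠ l := by decide
  have hBneA : ∀ j, B j ≠ A := by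
    intro j heq
    obtain ⟨l, hjl⟩ := hex j
    obtain ⟨z, hz⟩ := (hBcl l).2
    exact Set.disjoint_left.mp (hdisj j l hjl) (heq ▸ hsubBA l hz) hz
  have hsubB : ∀ (j) (i' : ℕ) (E : Set K), E ∈ P j i' → E ⊆ B j :=
    fun j i' E hE => ((hp j).part i').2.2.2 ▸ Set.subset_sUnion_of_mem hE
  set maxd : ℕ := max (d 0) (max (d 1) (d 2)) with hmaxd
  have hdj : ∀ j, d j ≤ maxd := by
    intro j
    fin_cases j
    · exact le_max_left _ _
    · exact (le_max_left _ _).trans (le_max_right _ _)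
    · exact (le_max_right _ _).trans (le_max_right _ _)
  refine ⟨fun i => if i ≤ s then {A} else P 0 (i - s - 1) ∪ P 1 (i - s - 1) ∪ P 2 (i - s - 1),
    s + 1 + maxd, ?_⟩
  have hmem' : ∀ (i' : ℕ) (E : Set K),
      E ∈ P 0 i' ∪ P 1 i' ∪ P 2 i' ↔ ∃ j, E ∈ P j i' := by
    intro i' E
    constructor
    · rintro ((h | h) | h)
      exacts [⟨0, h⟩, ⟨1, h⟩, ⟨2, h⟩]
    · rintro ⟨j, h⟩
      fin_cases j
      · exact Or.inl (Or.inl h)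
      · exact Or.inl (Or.inr h)
      · exact Or.inr h
  constructor
  case done_pos => omega
  case init => rw [if_pos (Nat.zero_le s)]
  case part =>
    intro i
    by_cases hi : i ≤ s
    · rw [if_pos hi]
      exact partOf_singleton hAcl hAne
    · rw [if_neg hi]
      refine ⟨?_, ?_, ?_, ?_⟩
      · exact (((hp 0).part _).1.union ((hp 1).part _).1).union ((hp 2).part _).1
      · intro E hE
        obtain ⟨j, hEj⟩ := (hmem' _ E).mp hE
        exact ((hp j).part _).2.1 E hEj
      · intro a ha b hb hab
        obtain ⟨j, haj⟩ := (hmem' _ a).mp ha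
        obtain ⟨l, hbl⟩ := (hmem' _ b).mp hb
        by_cases hjl : j = l
        · subst hjl
          exact ((hp j).part _).2.2.1 haj hbl hab
        · exact Set.disjoint_of_subset (hsubB _ _ _ haj) (hsubB _ _ _ hbl) (hdisj j l hjl)
      · rw [Set.sUnion_union, Set.sUnion_union, ((hp 0).part _).2.2.2,
          ((hp 1).part _).2.2.2, ((hp 2).part _).2.2.2, hA]
  case refine =>
    intro i E hE
    by_cases hi1 : i + 1 ≤ s
    · rw [if_pos hi1] at hE
      have hi0 : i ≤ s := by omega
      have hmeets : (A ∩ K₀).Nonempty := hsm.mp (by omega)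
      refine ⟨A, ?_, le_of_eq hE, fun _ => hmeets⟩
      rw [if_pos hi0]
      rfl
    · by_cases hi : i ≤ s
      · -- i = s, step from {A} to the three pieces
        rw [if_neg hi1] at hE
        have e0 : i + 1 - s - 1 = 0 := by omega
        rw [e0] at hE
        obtain ⟨j, hEj⟩ := (hmem' _ E).mp hE
        rw [(hp j).init, Set.mem_singleton_iff] at hEj
        subst hEj
        refine ⟨A, ?_, hsubBA j, fun h => absurd h (hBneA j)⟩
        rw [if_pos hi]
        rfl
      · -- i > s, inner step
        rw [if_neg hi1] at hE
        have e1 : i + 1 - s - 1 = (i - s - 1) + 1 := by omega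
        rw [e1] at hE
        obtain ⟨j, hEj⟩ := (hmem' _ E).mp hE
        obtain ⟨F, hF, hEF, hmeet⟩ := (hp j).refine _ E hEj
        refine ⟨F, ?_, hEF, hmeet⟩
        rw [if_neg hi]
        exact (hmem' _ F).mpr ⟨j, hF⟩
  case split =>
    intro i F hF hnF
    by_cases hi1 : i + 1 ≤ s
    · rw [if_pos (by omega : i ≤ s)] at hF
      rw [if_pos hi1] at hnF
      exact absurd hF hnF
    · by_cases hi : i ≤ s
      · -- i = s : the root splits into B 0, B 1, B 2
        have e0 : i + 1 - s - 1 = 0 := by omega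
        have hmemB : ∀ j, B j ∈ (if i + 1 ≤ s then {A}
            else P 0 (i+1-s-1) ∪ P 1 (i+1-s-1) ∪ P 2 (i+1-s-1) : Set (Set K)) := by
          intro j
          rw [if_neg hi1, e0]
          exact (hmem' _ _).mpr ⟨j, by rw [(hp j).init]; rfl⟩
        rw [if_pos hi, Set.mem_singleton_iff] at hF
        refine ⟨B 0, hmemB 0, B 1, hmemB 1, B 2, hmemB 2,
          ne_of_disjoint (hdisj 0 1 (by decide)) (hBcl 0).2,
          ne_of_disjoint (hdisj 0 2 (by decide)) (hBcl 0).2,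
          ne_of_disjoint (hdisj 1 2 (by decide)) (hBcl 1).2,
          (hBcl 0).2, (hBcl 1).2, (hBcl 2).2,
          hdisj 0 1 (by decide), hdisj 0 2 (by decide), hdisj 1 2 (by decide), ?_⟩
        rw [hF, hA]
      · -- i > s
        rw [if_neg hi] at hF
        rw [if_neg hi1] at hnF ⊢
        have e1 : i + 1 - s - 1 = (i - s - 1) + 1 := by omega
        rw [e1] at hnF ⊢
        obtain ⟨j, hFj⟩ := (hmem' _ F).mp hF
        have hnFj : F ∉ P j (i - s - 1 + 1) := fun h => hnF ((hmem' _ F).mpr ⟨j, h⟩)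
        obtain ⟨B₁, m1, B₂, m2, B₃, m3, rest⟩ := (hp j).split _ F hFj hnFj
        exact ⟨B₁, (hmem' _ _).mpr ⟨j, m1⟩, B₂, (hmem' _ _).mpr ⟨j, m2⟩,
          B₃, (hmem' _ _).mpr ⟨j, m3⟩, rest⟩
  case persist =>
    intro i F hF hmeet
    by_cases hi1 : i + 1 ≤ s
    · rw [if_pos (by omega : i ≤ s)] at hF
      left
      rw [if_pos hi1]
      exact hF
    · by_cases hi : i ≤ s
      · -- i = s and the root meets K₀, so s = 1, i = 1
        rw [if_pos hi, Set.mem_singleton_iff] at hF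
        subst hF
        have hs' : s = 1 := hsm.mpr hmeet
        right
        refine ⟨by omega, ?_⟩
        rw [if_pos (by omega : i - 1 ≤ s)]
        rfl
      · rw [if_neg hi] at hF
        obtain ⟨j, hFj⟩ := (hmem' _ F).mp hF
        rcases (hp j).persist _ F hFj hmeet with h | ⟨hi', hFprev⟩
        · left
          rw [if_neg hi1]
          have e1 : i + 1 - s - 1 = (i - s - 1) + 1 := by omega
          rw [e1]
          exact (hmem' _ F).mpr ⟨j, h⟩
        · right
          have hige : s + 2 ≤ i := by omega
          refine ⟨by omega, ?_⟩
          rw [if_neg (by omega : ¬ i - 1 ≤ s)]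
          have e2 : i - 1 - s - 1 = (i - s - 1) - 1 := by omega
          rw [e2]
          exact (hmem' _ F).mpr ⟨j, hFprev⟩
  case old =>
    intro i hD F hF hmeet
    have hi : ¬ i ≤ s := by omega
    rw [if_neg hi] at hF
    obtain ⟨j, hFj⟩ := (hmem' _ F).mp hF
    have hdji : d j ≤ i - s - 1 := by
      have := hdj j
      omega
    have hFprev := (hp j).old _ hdji F hFj hmeet
    have hige : s + 2 ≤ i := by
      have := (hp j).done_pos
      omega
    rw [if_neg (by omega : ¬ i - 1 ≤ s)]
    have e2 : i - 1 - s - 1 = (i - s - 1) - 1 := by omega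
    rw [e2]
    exact (hmem' _ F).mpr ⟨j, hFprev⟩
  case final =>
    intro i hD F hF
    have hi : ¬ i ≤ s := by omega
    rw [if_neg hi] at hF
    obtain ⟨j, hFj⟩ := (hmem' _ F).mp hF
    have hdji : d j ≤ i - s - 1 := by
      have := hdj j
      omega
    exact (hp j).final _ hdji F hFj

end Comp

section Pkg
variable {K : Type*} [TopologicalSpace K] [T2Space K] [TotallySeparatedSpace K]
variable {K₀ : Set K} {μ : Set (Set K)}

lemma pkg (hiso : ∀ x : K, IsOpen ({x} : Set K) → x ∈ K₀) :
    ∀ (n : ℕ) (D : Finset (Set K)), D.card = n → Odd D.card →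
    (∀ E ∈ D, IsClopen E ∧ E.Nonempty ∧ (∃ M ∈ μ, E ⊆ M) ∧ (E.Finite → ∃ x, E = {x})) →
    ((D : Set (Set K)).PairwiseDisjoint id) →
    ∃ P d, Pack K₀ μ (⋃₀ (D : Set (Set K))) P d := by
  intro n
  induction n using Nat.strong_induction_on with
  | _ n ih =>
    intro D hcard hodd hmem hpd
    classical
    rcases eq_or_ne D.card 1 with h1 | h1
    · -- base case : a single leaf
      obtain ⟨E, rfl⟩ := Finset.card_eq_one.mp h1
      obtain ⟨hcl, hne, hM, hfs⟩ := hmem E (Finset.mem_singleton_self E)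
      have hU : ⋃₀ ((({E} : Finset (Set K))) : Set (Set K)) = E := by
        simp
      rw [hU]
      by_cases hmeet : (E ∩ K₀).Nonempty
      · exact ⟨_, _, pack_keep hcl hne hmeet hM hfs⟩
      · rw [Set.not_nonempty_iff_eq_empty] at hmeet
        exact ⟨_, _, pack_cascade hiso hcl hne hmeet hM⟩
    · -- inductive case : peel off two leaves
      have hcard3 : 3 ≤ D.card := by
        rcases hodd with ⟨k, hk⟩
        omega
      have hpos : 0 < D.card := by omega
      obtain ⟨E₁, hE₁⟩ := Finset.card_pos.mp hpos
      have hcard2 : 0 < (D.erase E₁).card := by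
        rw [Finset.card_erase_of_mem hE₁]
        omega
      obtain ⟨E₂, hE₂⟩ := Finset.card_pos.mp hcard2
      have hE₂D : E₂ ∈ D := Finset.mem_of_mem_erase hE₂
      have hE₂₁ : E₂ ≠ E₁ := (Finset.mem_erase.mp hE₂).1
      set D' : Finset (Set K) := (D.erase E₁).erase E₂ with hD'
      have hD'sub : D' ⊆ D := (Finset.erase_subset _ _).trans (Finset.erase_subset _ _)
      have hD'card : D'.card = D.card - 2 := by
        rw [hD', Finset.card_erase_of_mem hE₂, Finset.card_erase_of_mem hE₁]
        omega
      have hD'odd : Odd D'.card := by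
        rcases hodd with ⟨k, hk⟩
        exact ⟨k - 1, by omega⟩
      have hmemD' : ∀ F, F ∈ D' ↔ F ≠ E₂ ∧ F ≠ E₁ ∧ F ∈ D := by
        intro F
        rw [hD', Finset.mem_erase, Finset.mem_erase]
      -- packages for the three pieces
      obtain ⟨P1, d1, h1⟩ := ih 1 (by omega) {E₁} (Finset.card_singleton E₁) (by simp)
        (by intro F hF; rw [Finset.mem_singleton] at hF; rw [hF]; exact hmem E₁ hE₁)
        (by simp)
      obtain ⟨P2, d2, h2⟩ := ih 1 (by omega) {E₂} (Finset.card_singleton E₂) (by simp)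
        (by intro F hF; rw [Finset.mem_singleton] at hF; rw [hF]; exact hmem E₂ hE₂D)
        (by simp)
      obtain ⟨P3, d3, h3⟩ := ih (n - 2) (by omega) D' (by omega)
        hD'odd (fun F hF => hmem F (hD'sub hF))
        (hpd.subset (Finset.coe_subset.mpr hD'sub))
      have hU1 : ⋃₀ ((({E₁} : Finset (Set K))) : Set (Set K)) = E₁ := by simp
      have hU2 : ⋃₀ ((({E₂} : Finset (Set K))) : Set (Set K)) = E₂ := by simp
      rw [hU1] at h1
      rw [hU2] at h2
      -- disjointness
      have hdisj12 : Disjoint E₁ E₂ := hpd hE₁ hE₂D (Ne.symm hE₂₁)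
      have hdisj1R : Disjoint E₁ (⋃₀ (D' : Set (Set K))) := by
        rw [Set.disjoint_sUnion_right]
        intro F hF
        rw [Finset.mem_coe, hmemD'] at hF
        exact hpd hE₁ hF.2.2 (Ne.symm hF.2.1)
      have hdisj2R : Disjoint E₂ (⋃₀ (D' : Set (Set K))) := by
        rw [Set.disjoint_sUnion_right]
        intro F hF
        rw [Finset.mem_coe, hmemD'] at hF
        exact hpd hE₂D hF.2.2 (Ne.symm hF.1)
      have hA' : ⋃₀ (D : Set (Set K)) = E₁ ∪ E₂ ∪ ⋃₀ (D' : Set (Set K)) := by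
        ext x
        simp only [Set.mem_sUnion, Set.mem_union, Finset.mem_coe]
        constructor
        · rintro ⟨F, hF, hx⟩
          by_cases hF1 : F = E₁
          · exact Or.inl (Or.inl (hF1 ▸ hx))
          · by_cases hF2 : F = E₂
            · exact Or.inl (Or.inr (hF2 ▸ hx))
            · exact Or.inr ⟨F, (hmemD' F).mpr ⟨hF2, hF1, hF⟩, hx⟩
        · rintro ((hx | hx) | ⟨F, hF, hx⟩)
          · exact ⟨E₁, hE₁, hx⟩
          · exact ⟨E₂, hE₂D, hx⟩
          · exact ⟨F, ((hmemD' F).mp hF).2.2, hx⟩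
      apply pack_comp (B := ![E₁, E₂, ⋃₀ (D' : Set (Set K))]) (P := ![P1, P2, P3])
        (d := ![d1, d2, d3])
      · intro j
        fin_cases j
        · exact h1
        · exact h2
        · exact h3
      · intro j l hjl
        fin_cases j <;> fin_cases l <;>
          first
            | exact absurd rfl hjl
            | exact hdisj12 | exact hdisj12.symm | exact hdisj1R | exact hdisj1R.symm
            | exact hdisj2R | exact hdisj2R.symm
            | simp at hjl
      · exact hA'
end Pkg

section Leaf
variable {K : Type*} [TopologicalSpace K] [T2Space K] [TotallySeparatedSpace K]
variable {K₀ : Set K} {μ : Set (Set K)}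

lemma leaves (hμ : IsFiniteClopenPartition μ) {A : Set K} (hA : IsClopen A) (hne : A.Nonempty)
    (hfs : A.Finite → ∃ x, A = {x}) :
    ∃ D : Finset (Set K), Odd D.card ∧
      (∀ E ∈ D, IsClopen E ∧ E.Nonempty ∧ (∃ M ∈ μ, E ⊆ M) ∧ (E.Finite → ∃ x, E = {x})) ∧
      (D : Set (Set K)).PairwiseDisjoint id ∧ ⋃₀ (D : Set (Set K)) = A := by
  classical
  obtain ⟨hμfin, hμmem, hμpd, hμcov⟩ := hμ
  set Mb : Finset (Set K) := hμfin.toFinset with hMb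
  set D1 : Finset (Set K) := (Mb.image (fun M => A ∩ M)).filter (fun P => P.Nonempty) with hD1
  have hD1elim : ∀ P ∈ D1, ∃ M ∈ μ, P = A ∩ M ∧ P.Nonempty := by
    intro P hP
    rw [hD1, Finset.mem_filter, Finset.mem_image] at hP
    obtain ⟨⟨M, hM, rfl⟩, hPne⟩ := hP
    exact ⟨M, (Set.Finite.mem_toFinset hμfin).mp hM, rfl, hPne⟩
  set D2 : Finset (Set K) := D1.biUnion
    (fun P => if h : P.Finite then h.toFinset.image (fun x => ({x} : Set K)) else {P}) with hD2
  have hD2elim : ∀ E ∈ D2, ∃ P ∈ D1, E ⊆ P ∧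
      ((P.Finite → ∃ x ∈ P, E = {x}) ∧ (¬ P.Finite → E = P)) := by
    intro E hE
    rw [hD2, Finset.mem_biUnion] at hE
    obtain ⟨P, hP, hEP⟩ := hE
    by_cases h : P.Finite
    · rw [dif_pos h, Finset.mem_image] at hEP
      obtain ⟨x, hx, rfl⟩ := hEP
      rw [Set.Finite.mem_toFinset h] at hx
      exact ⟨P, hP, Set.singleton_subset_iff.mpr hx, fun _ => ⟨x, hx, rfl⟩, fun h' => absurd h h'⟩
    · rw [dif_neg h, Finset.mem_singleton] at hEP
      subst hEP
      exact ⟨E, hP, le_refl _, fun h' => absurd h' h, fun _ => rfl⟩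
  have hD1props : ∀ P ∈ D1, IsClopen P ∧ P.Nonempty ∧ (∃ M ∈ μ, P ⊆ M) ∧ P ⊆ A := by
    intro P hP
    obtain ⟨M, hM, rfl, hPne⟩ := hD1elim P hP
    exact ⟨hA.inter (hμmem M hM).1, hPne, ⟨M, hM, Set.inter_subset_right⟩,
      Set.inter_subset_left⟩
  have hD2props : ∀ E ∈ D2, IsClopen E ∧ E.Nonempty ∧ (∃ M ∈ μ, E ⊆ M) ∧
      (E.Finite → ∃ x, E = {x}) ∧ E ⊆ A := by
    intro E hE
    obtain ⟨P, hP, hEP, hfin, hinf⟩ := hD2elim E hE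
    obtain ⟨hPcl, hPne, ⟨M, hM, hPM⟩, hPA⟩ := hD1props P hP
    by_cases h : P.Finite
    · obtain ⟨x, hx, rfl⟩ := hfin h
      exact ⟨clopen_singleton_of_open (isolated_of_finite_clopen hPcl h hx),
        Set.singleton_nonempty x, ⟨M, hM, hEP.trans hPM⟩, fun _ => ⟨x, rfl⟩, hEP.trans hPA⟩
    · rw [hinf h]
      exact ⟨hPcl, hPne, ⟨M, hM, hPM⟩, fun h' => absurd h' h, hPA⟩
  have hD2pd : (D2 : Set (Set K)).PairwiseDisjoint id := by
    intro a ha b hb hab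
    obtain ⟨Pa, hPa, haP, hafin, hainf⟩ := hD2elim a ha
    obtain ⟨Pb, hPb, hbP, hbfin, hbinf⟩ := hD2elim b hb
    by_cases hPP : Pa = Pb
    · subst hPP
      by_cases h : Pa.Finite
      · obtain ⟨x, hx, rfl⟩ := hafin h
        obtain ⟨y, hy, rfl⟩ := hbfin h
        have : x ≠ y := fun hxy => hab (by rw [hxy])
        exact Set.disjoint_singleton.mpr this
      · exact absurd ((hainf h).trans (hbinf h).symm) hab
    · obtain ⟨Ma, hMa, rfl, -⟩ := hD1elim Pa hPa
      obtain ⟨Mb', hMb', rfl, -⟩ := hD1elim Pb hPb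
      have hMM : Ma ≠ Mb' := fun h => hPP (by rw [h])
      have : Disjoint Ma Mb' := hμpd hMa hMb' hMM
      exact Set.disjoint_of_subset (haP.trans Set.inter_subset_right)
        (hbP.trans Set.inter_subset_right) this
  have hD2cov : ⋃₀ (D2 : Set (Set K)) = A := by
    apply Set.Subset.antisymm
    · intro x hx
      obtain ⟨E, hE, hxE⟩ := hx
      exact (hD2props E hE).2.2.2.2 hxE
    · intro x hx
      have hxU : x ∈ ⋃₀ μ := hμcov.symm ▸ Set.mem_univ x
      obtain ⟨M, hM, hxM⟩ := hxU
      have hPmem : A ∩ M ∈ D1 := by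
        rw [hD1, Finset.mem_filter, Finset.mem_image]
        exact ⟨⟨M, (Set.Finite.mem_toFinset hμfin).mpr hM, rfl⟩, ⟨x, hx, hxM⟩⟩
      by_cases h : (A ∩ M).Finite
      · refine ⟨{x}, ?_, rfl⟩
        rw [hD2, Finset.mem_coe, Finset.mem_biUnion]
        refine ⟨A ∩ M, hPmem, ?_⟩
        rw [dif_pos h, Finset.mem_image]
        exact ⟨x, (Set.Finite.mem_toFinset h).mpr ⟨hx, hxM⟩, rfl⟩
      · refine ⟨A ∩ M, ?_, ⟨hx, hxM⟩⟩
        rw [hD2, Finset.mem_coe, Finset.mem_biUnion]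
        exact ⟨A ∩ M, hPmem, by rw [dif_neg h, Finset.mem_singleton]⟩
  by_cases hodd : Odd D2.card
  · exact ⟨D2, hodd, fun E hE => ⟨(hD2props E hE).1, (hD2props E hE).2.1,
      (hD2props E hE).2.2.1, (hD2props E hE).2.2.2.1⟩, hD2pd, hD2cov⟩
  · -- even number of leaves : split an infinite leaf in two
    have hex : ∃ E₀ ∈ D2, E₀.Infinite := by
      by_contra hc
      push_neg at hc
      have hAfin : A.Finite := by
        rw [← hD2cov]
        exact Set.Finite.sUnion D2.finite_toSet hc
      obtain ⟨x, hxA⟩ := hfs hAfin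
      have hmemx : ({x} : Set K) ∈ D2 := by
        have hxx : x ∈ A := by rw [hxA]; exact rfl
        have hxU : x ∈ ⋃₀ (D2 : Set (Set K)) := by rw [hD2cov]; exact hxx
        obtain ⟨E, hE, hxE⟩ := hxU
        have hEsub : E ⊆ A := (hD2props E hE).2.2.2.2
        have hEx : E = {x} := Set.Subset.antisymm (hxA ▸ hEsub)
          (Set.singleton_subset_iff.mpr hxE)
        exact hEx ▸ hE
      have hD2sing : D2 = {({x} : Set K)} := by
        apply Finset.eq_singleton_iff_unique_mem.mpr
        refine ⟨hmemx, fun F hF => ?_⟩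
        have hFsub : F ⊆ A := (hD2props F hF).2.2.2.2
        obtain ⟨z, hz⟩ := (hD2props F hF).2.1
        apply Set.Subset.antisymm (hxA ▸ hFsub)
        have : z = x := by
          have := hxA ▸ hFsub hz
          exact this
        rw [← this]
        exact Set.singleton_subset_iff.mpr hz
      rw [hD2sing, Finset.card_singleton] at hodd
      exact absurd odd_one hodd
    obtain ⟨E₀, hE₀, hE₀inf⟩ := hex
    obtain ⟨B₁, B₂, hB1cl, hB2cl, hB1ne, hB2ne, hBd, hBu, hB1fs, hB2fs⟩ :=
      split2good (hD2props E₀ hE₀).1 hE₀inf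
    have hB1sub : B₁ ⊆ E₀ := hBu ▸ Set.subset_union_left
    have hB2sub : B₂ ⊆ E₀ := hBu ▸ Set.subset_union_right
    have hE₀A : E₀ ⊆ A := (hD2props E₀ hE₀).2.2.2.2
    have hnotmem : ∀ B, B ⊆ E₀ → B.Nonempty → B ∉ D2.erase E₀ := by
      intro B hsub hBne hmem
      have hBD2 := Finset.mem_of_mem_erase hmem
      have hBne' := (Finset.mem_erase.mp hmem).1
      have hdisj := hD2pd (Finset.mem_coe.mpr hBD2) (Finset.mem_coe.mpr hE₀) hBne'
      obtain ⟨z, hz⟩ := hBne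
      exact Set.disjoint_left.mp hdisj hz (hsub hz)
    have hB1B2 : B₁ ≠ B₂ := ne_of_disjoint hBd hB1ne
    have hB2mem : B₂ ∉ D2.erase E₀ := hnotmem B₂ hB2sub hB2ne
    have hB1mem : B₁ ∉ insert B₂ (D2.erase E₀) := by
      rw [Finset.mem_insert]
      rintro (h | h)
      · exact hB1B2 h
      · exact hnotmem B₁ hB1sub hB1ne h
    set D3 : Finset (Set K) := insert B₁ (insert B₂ (D2.erase E₀)) with hD3
    have hD3elim : ∀ F, F ∈ D3 ↔ F = B₁ ∨ F = B₂ ∨ (F ≠ E₀ ∧ F ∈ D2) := by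
      intro F
      rw [hD3, Finset.mem_insert, Finset.mem_insert, Finset.mem_erase]
    have hD3card : Odd D3.card := by
      have hcard0 : 0 < D2.card := Finset.card_pos.mpr ⟨E₀, hE₀⟩
      have : D3.card = D2.card - 1 + 1 + 1 := by
        rw [hD3, Finset.card_insert_of_notMem hB1mem, Finset.card_insert_of_notMem hB2mem,
          Finset.card_erase_of_mem hE₀]
      rw [Nat.odd_iff] at hodd ⊢
      omega
    obtain ⟨M₀, hM₀, hEM₀⟩ := (hD2props E₀ hE₀).2.2.1
    refine ⟨D3, hD3card, ?_, ?_, ?_⟩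
    · intro F hF
      rcases (hD3elim F).mp hF with rfl | rfl | ⟨-, hFD2⟩
      · exact ⟨hB1cl, hB1ne, ⟨M₀, hM₀, hB1sub.trans hEM₀⟩, hB1fs⟩
      · exact ⟨hB2cl, hB2ne, ⟨M₀, hM₀, hB2sub.trans hEM₀⟩, hB2fs⟩
      · exact ⟨(hD2props F hFD2).1, (hD2props F hFD2).2.1, (hD2props F hFD2).2.2.1,
          (hD2props F hFD2).2.2.2.1⟩
    · intro a ha b hb hab
      rw [Finset.mem_coe] at ha hb
      have key : ∀ G, G ∈ D2 → G ≠ E₀ → ∀ B, B ⊆ E₀ → Disjoint B G := by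
        intro G hG hGne B hsub
        exact ((hD2pd (Finset.mem_coe.mpr hE₀) (Finset.mem_coe.mpr hG)
          (fun h => hGne h.symm)).mono_left hsub)
      rcases (hD3elim a).mp ha with rfl | rfl | ⟨hane, haD2⟩ <;>
        rcases (hD3elim b).mp hb with rfl | rfl | ⟨hbne, hbD2⟩
      · exact absurd rfl hab
      · exact hBd
      · exact key b hbD2 hbne a hB1sub
      · exact hBd.symm
      · exact absurd rfl hab
      · exact key b hbD2 hbne a hB2sub
      · exact (key a haD2 hane b hB1sub).symm
      · exact (key a haD2 hane b hB2sub).symm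
      · exact hD2pd (Finset.mem_coe.mpr haD2) (Finset.mem_coe.mpr hbD2) hab
    · apply Set.Subset.antisymm
      · intro x hx
        obtain ⟨F, hF, hxF⟩ := hx
        rcases (hD3elim F).mp (Finset.mem_coe.mp hF) with rfl | rfl | ⟨-, hFD2⟩
        · exact hE₀A (hB1sub hxF)
        · exact hE₀A (hB2sub hxF)
        · exact (hD2props F hFD2).2.2.2.2 hxF
      · intro x hx
        have hxU : x ∈ ⋃₀ (D2 : Set (Set K)) := by rw [hD2cov]; exact hx
        obtain ⟨F, hF, hxF⟩ := hxU
        rw [Finset.mem_coe] at hF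
        by_cases hFE : F = E₀
        · subst hFE
          have : x ∈ B₁ ∪ B₂ := hBu ▸ hxF
          rcases this with h | h
          · exact ⟨B₁, (hD3elim B₁).mpr (Or.inl rfl), h⟩
          · exact ⟨B₂, (hD3elim B₂).mpr (Or.inr (Or.inl rfl)), h⟩
        · exact ⟨F, (hD3elim F).mpr (Or.inr (Or.inr ⟨hFE, hF⟩)), hxF⟩
end Leaf


/-- The Partition Lemma (Lemma `l.key`): with `(K₀, K₁)` satisfying condition (*), `K₁`
infinite, and `ξ, μ` finite clopen partitions of `K₁` such that every finite element of
`ξ` is a singleton, there is a finite increasing chain of finite clopen partitions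
`ξ = c 0 ≺ c 1 ≺ ⋯ ≺ c n` such that every element of `c i` not retained in `c (i+1)`
splits into three distinct nonempty elements of `c (i+1)`; an element `A ∈ c i` meets
`K₀` iff it belongs to `c (i-1) ∪ c (i+1)` (with the out-of-range partitions empty);
`c n` refines `μ`; and all finite elements of `c n` are singletons. -/
theorem stmt17 (K₁ : Type*) [TopologicalSpace K₁] [CompactSpace K₁]
    [TopologicalSpace.MetrizableSpace K₁] [TotallyDisconnectedSpace K₁] [Infinite K₁]
    (K₀ : Set K₁) (hK₀ : IsClosed K₀)
    (hiso : ∀ x : K₁, IsOpen ({x} : Set K₁) → x ∈ K₀)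
    (ξ μ : Set (Set K₁))
    (hξ : IsFiniteClopenPartition ξ) (hμ : IsFiniteClopenPartition μ)
    (hsing : ∀ A ∈ ξ, A.Finite → ∃ x : K₁, A = {x}) :
    ∃ (n : ℕ) (c : ℕ → Set (Set K₁)),
      c 0 = ξ ∧
      (∀ i ≤ n, IsFiniteClopenPartition (c i)) ∧
      (∀ i < n, PartRefines (c i) (c (i + 1))) ∧
      (∀ i < n, ∀ A ∈ c i, A ∉ c (i + 1) →
        ∃ B₁ ∈ c (i + 1), ∃ B₂ ∈ c (i + 1), ∃ B₃ ∈ c (i + 1),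
          B₁ ≠ B₂ ∧ B₁ ≠ B₃ ∧ B₂ ≠ B₃ ∧
          B₁.Nonempty ∧ B₂.Nonempty ∧ B₃.Nonempty ∧
          Disjoint B₁ B₂ ∧ Disjoint B₁ B₃ ∧ Disjoint B₂ B₃ ∧
          A = B₁ ∪ B₂ ∪ B₃) ∧
      (∀ i ≤ n, ∀ A ∈ c i,
        ((A ∩ K₀).Nonempty ↔
          ((1 ≤ i ∧ A ∈ c (i - 1)) ∨ (i < n ∧ A ∈ c (i + 1))))) ∧
      PartRefines μ (c n) ∧
      (∀ A ∈ c n, A.Finite → ∃ x : K₁, A = {x}) := by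
  letI := TopologicalSpace.metrizableSpaceMetric K₁
  classical
  obtain ⟨hξfin, hξmem, hξpd, hξcov⟩ := hξ
  have hall : ∀ A, A ∈ ξ → ∃ P d, Pack K₀ μ A P d := by
    intro A hA
    obtain ⟨D, hDodd, hDmem, hDpd, hDcov⟩ := leaves hμ (hξmem A hA).1 (hξmem A hA).2
      (hsing A hA)
    obtain ⟨P, d, hPd⟩ := pkg hiso D.card D rfl hDodd hDmem hDpd
    rw [hDcov] at hPd
    exact ⟨P, d, hPd⟩
  choose P d hP using hall
  haveI : Finite ↥ξ := hξfin.to_subtype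
  obtain ⟨N, hN⟩ := Finite.exists_le (fun A : ξ => d A.1 A.2)
  set c : ℕ → Set (Set K₁) := fun i => ⋃ A : ξ, P A.1 A.2 i with hc
  have hmemc : ∀ (i : ℕ) (E : Set K₁), E ∈ c i ↔ ∃ A : ξ, E ∈ P A.1 A.2 i :=
    fun i E => Set.mem_iUnion
  have hsub : ∀ (A : ξ) (i : ℕ) (E : Set K₁), E ∈ P A.1 A.2 i → E ⊆ A.1 :=
    fun A i E hE => ((hP A.1 A.2).part i).2.2.2 ▸ Set.subset_sUnion_of_mem hE
  have hclne : ∀ (A : ξ) (i : ℕ) (E : Set K₁), E ∈ P A.1 A.2 i → IsClopen E ∧ E.Nonempty :=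
    fun A i E hE => ((hP A.1 A.2).part i).2.1 E hE
  have huniq : ∀ (A B : ξ) (i j : ℕ) (E : Set K₁),
      E ∈ P A.1 A.2 i → E ∈ P B.1 B.2 j → A = B := by
    intro A B i j E hEA hEB
    by_contra hAB
    have hne : A.1 ≠ B.1 := fun h => hAB (Subtype.ext h)
    have hd := hξpd A.2 B.2 hne
    obtain ⟨z, hz⟩ := (hclne A i E hEA).2
    exact Set.disjoint_left.mp hd (hsub A i E hEA hz) (hsub B j E hEB hz)
  have hstay : ∀ (i : ℕ) (E : Set K₁), E ∈ c i → E ∈ c (i + 1) → (E ∩ K₀).Nonempty := by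
    intro i E h1 h2
    obtain ⟨A, hEA⟩ := (hmemc i E).mp h1
    obtain ⟨B, hEB⟩ := (hmemc (i + 1) E).mp h2
    have hAB : A = B := huniq A B i (i + 1) E hEA hEB
    subst hAB
    obtain ⟨F, hF, hEF, himp⟩ := (hP A.1 A.2).refine i E hEB
    have hEeqF : E = F := by
      by_contra hne
      obtain ⟨z, hz⟩ := (hclne A i E hEA).2
      exact Set.disjoint_left.mp (((hP A.1 A.2).part i).2.2.1 hEA hF hne) hz (hEF hz)
    exact hEeqF ▸ himp hEeqF
  refine ⟨N + 1, c, ?_, ?_, ?_, ?_, ?_, ?_, ?_⟩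
  · -- c 0 = ξ
    ext E
    rw [hmemc 0 E]
    constructor
    · rintro ⟨A, hE⟩
      rw [(hP A.1 A.2).init, Set.mem_singleton_iff] at hE
      rw [hE]
      exact A.2
    · intro hE
      exact ⟨⟨E, hE⟩, by rw [(hP E hE).init]; rfl⟩
  · -- partitions
    intro i _
    refine ⟨Set.finite_iUnion (fun A => ((hP A.1 A.2).part i).1), ?_, ?_, ?_⟩
    · intro E hE
      obtain ⟨A, hEA⟩ := (hmemc i E).mp hE
      exact hclne A i E hEA
    · intro a ha b hb hab
      obtain ⟨A, haA⟩ := (hmemc i a).mp ha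
      obtain ⟨B, hbB⟩ := (hmemc i b).mp hb
      by_cases hAB : A = B
      · subst hAB
        exact ((hP A.1 A.2).part i).2.2.1 haA hbB hab
      · exact Set.disjoint_of_subset (hsub A i a haA) (hsub B i b hbB)
          (hξpd A.2 B.2 (fun h => hAB (Subtype.ext h)))
    · apply Set.eq_univ_of_forall
      intro x
      have hx : x ∈ ⋃₀ ξ := by rw [hξcov]; trivial
      obtain ⟨A, hA, hxA⟩ := hx
      have hx' : x ∈ ⋃₀ (P A hA i) := by rw [((hP A hA).part i).2.2.2]; exact hxA
      obtain ⟨E, hE, hxE⟩ := hx'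
      exact ⟨E, (hmemc i E).mpr ⟨⟨A, hA⟩, hE⟩, hxE⟩
  · -- refinement
    intro i _ E hE
    obtain ⟨A, hEA⟩ := (hmemc (i + 1) E).mp hE
    obtain ⟨F, hF, hEF, -⟩ := (hP A.1 A.2).refine i E hEA
    exact ⟨F, (hmemc i F).mpr ⟨A, hF⟩, hEF⟩
  · -- triple splitting
    intro i _ F hF hnF
    obtain ⟨A, hFA⟩ := (hmemc i F).mp hF
    have hnF' : F ∉ P A.1 A.2 (i + 1) := fun h => hnF ((hmemc (i + 1) F).mpr ⟨A, h⟩)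
    obtain ⟨B₁, m1, B₂, m2, B₃, m3, rest⟩ := (hP A.1 A.2).split i F hFA hnF'
    exact ⟨B₁, (hmemc _ _).mpr ⟨A, m1⟩, B₂, (hmemc _ _).mpr ⟨A, m2⟩,
      B₃, (hmemc _ _).mpr ⟨A, m3⟩, rest⟩
  · -- the K₀ dichotomy
    intro i hi F hF
    obtain ⟨A, hFA⟩ := (hmemc i F).mp hF
    constructor
    · intro hmeet
      by_cases hin : i = N + 1
      · subst hin
        have hd : d A.1 A.2 ≤ N + 1 := (hN A).trans (by omega)
        have := (hP A.1 A.2).old (N + 1) hd F hFA hmeet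
        exact Or.inl ⟨by omega, (hmemc _ F).mpr ⟨A, this⟩⟩
      · have hilt : i < N + 1 := by omega
        rcases (hP A.1 A.2).persist i F hFA hmeet with h | ⟨h1, h⟩
        · exact Or.inr ⟨hilt, (hmemc _ F).mpr ⟨A, h⟩⟩
        · exact Or.inl ⟨h1, (hmemc _ F).mpr ⟨A, h⟩⟩
    · rintro (⟨h1, hprev⟩ | ⟨-, hnext⟩)
      · have e : i - 1 + 1 = i := by omega
        exact hstay (i - 1) F hprev (by rw [e]; exact hF)
      · exact hstay i F hF hnext
  · -- refines μ
    intro E hE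
    obtain ⟨A, hEA⟩ := (hmemc (N + 1) E).mp hE
    have hd : d A.1 A.2 ≤ N + 1 := (hN A).trans (by omega)
    exact ((hP A.1 A.2).final (N + 1) hd E hEA).1
  · -- finite sets are singletons at the end
    intro E hE hEfin
    obtain ⟨A, hEA⟩ := (hmemc (N + 1) E).mp hE
    have hd : d A.1 A.2 ≤ N + 1 := (hN A).trans (by omega)
    exact ((hP A.1 A.2).final (N + 1) hd E hEA).2 hEfin
end
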